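/- arXiv:2509.06194 — 6 statements merged into one kernel-verified Lean document; each statement's English description precedes it below -/
import Mathlib

section
/- Let G be a cactus graph with n vertices, m edges, and b bridges. Then m ≤ ⌊(3(n−1) − b)/2⌋. -/
open Finset SimpleGraph

/-- The degree of a vertex `v`: the number of its neighbors in `G`. -/
noncomputable def gdeg {V : Type*} (G : SimpleGraph V) (v : V) : ℕ :=
  (G.neighborSet v).ncard

/-- The set of edge sets of cycles of `G`.  A cycle (as a subgraph) is identified
with its set of edges, which is invariant under rotation and reversal of the
corresponding closed walks. -/
def cycleEdgeSets {V : Type*} (G : SimpleGraph V) : Set (Set (Sym2 V)) :=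
  {s | ∃ (u : V) (w : G.Walk u u), w.IsCycle ∧ s = {e | e ∈ w.edges}}

/-- The number of cycles of `G`. -/
noncomputable def numCycles {V : Type*} (G : SimpleGraph V) : ℕ :=
  (cycleEdgeSets G).ncard

/-- A cactus graph: a connected graph in which every edge belongs to at most one
cycle, i.e. any two cycles sharing an edge coincide. -/
def IsCactus {V : Type*} (G : SimpleGraph V) : Prop :=
  G.Connected ∧
    ∀ s₁ ∈ cycleEdgeSets G, ∀ s₂ ∈ cycleEdgeSets G, (s₁ ∩ s₂).Nonempty → s₁ = s₂

/-- A unicyclic graph: a connected graph containing exactly one cycle. -/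
def IsUnicyclic {V : Type*} (G : SimpleGraph V) : Prop :=
  G.Connected ∧ ∃! s, s ∈ cycleEdgeSets G

/-- A graph is bridge-less if it has no bridge. -/
def BridgeLess {V : Type*} (G : SimpleGraph V) : Prop :=
  ∀ e, ¬ G.IsBridge e

/-- The number of bridges of `G`. -/
noncomputable def bridgeCount {V : Type*} (G : SimpleGraph V) : ℕ :=
  {e : Sym2 V | G.IsBridge e}.ncard

/-- A triangulated cactus: a cactus in which every cycle has length three and
every edge belongs to a cycle. -/
def IsTriangulatedCactus {V : Type*} (G : SimpleGraph V) : Prop :=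
  IsCactus G ∧ (∀ (u : V) (w : G.Walk u u), w.IsCycle → w.length = 3) ∧
    ∀ e ∈ G.edgeSet, ∃ (u : V) (w : G.Walk u u), w.IsCycle ∧ e ∈ w.edges

/-- The connected component of `x` in `G` contains a cycle. -/
def HasCycleFrom {V : Type*} (G : SimpleGraph V) (x : V) : Prop :=
  ∃ (u : V) (w : G.Walk u u), w.IsCycle ∧ G.Reachable x u

/-- A core cactus: a cactus graph with no bridge whose removal splits the graph
into two components each containing a cycle. -/
def IsCoreCactus {V : Type*} (G : SimpleGraph V) : Prop :=
  IsCactus G ∧ ∀ u v : V, G.IsBridge s(u, v) →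
    ¬ (HasCycleFrom (G.deleteEdges {s(u, v)}) u ∧
       HasCycleFrom (G.deleteEdges {s(u, v)}) v)

/-- `d 1, …, d n` is a degree sequence: non-increasing, with positive entries
bounded by `n - 1`, and with even sum. -/
def IsDegSeq (n : ℕ) (d : ℕ → ℕ) : Prop :=
  (∀ i j, 1 ≤ i → i ≤ j → j ≤ n → d j ≤ d i) ∧
  (∀ i, 1 ≤ i → i ≤ n → 1 ≤ d i ∧ d i ≤ n - 1) ∧
  Even (∑ i ∈ Finset.Icc 1 n, d i)

/-- A graph `G` on vertex set `{1, …, n}` realizes the sequence `d 1, …, d n`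
if the degree of vertex `i` is `d i` for every `i`. -/
def Realizes {n : ℕ} (G : SimpleGraph (Fin n)) (d : ℕ → ℕ) : Prop :=
  ∀ i : Fin n, gdeg G i = d (i.1 + 1)

/-- `μ₁`: the number of entries of the sequence equal to `1`. -/
def mu1 (n : ℕ) (d : ℕ → ℕ) : ℕ :=
  ((Finset.Icc 1 n).filter fun i => d i = 1).card

/-- `μ_odd`: the number of odd entries of the sequence that are greater than `1`. -/
def muOdd (n : ℕ) (d : ℕ → ℕ) : ℕ :=
  ((Finset.Icc 1 n).filter fun i => Odd (d i) ∧ 1 < d i).card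

/-- The bridge parameter `β = max {μ₁, (μ₁ + μ_odd)/2}` of a sequence. -/
def seqBeta (n : ℕ) (d : ℕ → ℕ) : ℕ :=
  max (mu1 n d) ((mu1 n d + muOdd n d) / 2)

/-- `μ₁` of a graph: the number of vertices of degree `1`. -/
noncomputable def gmu1 {V : Type*} (G : SimpleGraph V) : ℕ :=
  {v : V | gdeg G v = 1}.ncard

/-- `μ_odd` of a graph: the number of vertices of odd degree greater than `1`. -/
noncomputable def gmuOdd {V : Type*} (G : SimpleGraph V) : ℕ :=
  {v : V | Odd (gdeg G v) ∧ 1 < gdeg G v}.ncard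

/-- The bridge parameter `β = max {μ₁, (μ₁ + μ_odd)/2}` of a graph. -/
noncomputable def graphBeta {V : Type*} (G : SimpleGraph V) : ℕ :=
  max (gmu1 G) ((gmu1 G + gmuOdd G) / 2)

section Aux

variable {V : Type*}

private lemma edgeSet_sdiff_single' (G : SimpleGraph V) (e : Sym2 V) (he : e ∈ G.edgeSet) :
    (G \ fromEdgeSet {e}).edgeSet = G.edgeSet \ {e} := by
  rw [edgeSet_sdiff, edgeSet_fromEdgeSet, edgeSet_sdiff_sdiff_isDiag]

private lemma walk_reach {G : SimpleGraph V} {a b : V}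
    (hre : (G \ fromEdgeSet {s(a, b)}).Reachable a b) :
    ∀ {x y : V} (_ : G.Walk x y), (G \ fromEdgeSet {s(a, b)}).Reachable x y := by
  intro x y p
  induction p with
  | nil => exact Reachable.refl _
  | @cons x c d h q ih =>
    refine Reachable.trans ?_ ih
    by_cases hxc : s(x, c) = s(a, b)
    · rw [Sym2.eq_iff] at hxc
      rcases hxc with ⟨rfl, rfl⟩ | ⟨rfl, rfl⟩
      · exact hre
      · exact hre.symm
    · refine Adj.reachable ?_
      rw [sdiff_adj]
      exact ⟨h, fun hf => hxc ((fromEdgeSet_adj _).mp hf).1⟩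

private lemma connected_sdiff {G : SimpleGraph V} {e : Sym2 V}
    (hc : G.Connected) (_he : e ∈ G.edgeSet) (hb : ¬ G.IsBridge e) :
    (G \ fromEdgeSet {e}).Connected := by
  induction e using Sym2.ind with
  | _ a b =>
    rw [isBridge_iff] at hb
    push_neg at hb
    have hre : (G \ fromEdgeSet {s(a, b)}).Reachable a b := hb
    rw [connected_iff]
    refine ⟨fun x y => ?_, hc.nonempty⟩
    obtain ⟨p⟩ := hc.preconnected x y
    exact walk_reach hre p

private lemma bridge_mem' {G : SimpleGraph V} (hc : G.Connected) {e : Sym2 V}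
    (h : G.IsBridge e) : e ∈ G.edgeSet := by
  induction e using Sym2.ind with
  | _ a b => exact G.mem_edgeSet.mpr ((h.reachable_iff_adj).mp (hc.preconnected a b))

private lemma tree_case {V : Type*} [Fintype V] (G : SimpleGraph V)
    (hconn : G.Connected) (hac : G.IsAcyclic) :
    2 * G.edgeSet.ncard + bridgeCount G = 3 * (Fintype.card V - 1) := by
  classical
  have ht : G.IsTree := ⟨hconn, hac⟩
  have hcard := ht.card_edgeFinset
  have hmm : G.edgeSet.ncard = G.edgeFinset.card := by
    rw [← coe_edgeFinset, Set.ncard_coe_finset]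
  have hbr : {e : Sym2 V | G.IsBridge e} = G.edgeSet := by
    ext f
    simp only [Set.mem_setOf_eq]
    exact ⟨fun h => bridge_mem' hconn h, fun h => (isBridge_iff_mem_and_forall_cycle_notMem h).mpr
      (by intro u p hp; exact absurd hp (hac p))⟩
  have hb : bridgeCount G = G.edgeSet.ncard := by rw [bridgeCount, hbr]
  omega

private lemma key_lemma : ∀ (N : ℕ) {V : Type*} [Fintype V] (G : SimpleGraph V),
    G.edgeSet.ncard ≤ N → IsCactus G →
    2 * G.edgeSet.ncard + bridgeCount G ≤ 3 * (Fintype.card V - 1) := by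
  intro N
  induction N with
  | zero =>
    intro V _ G hm hG
    have hac : G.IsAcyclic := by
      intro v c hc
      have h3 := hc.three_le_length
      have hne : c.edges ≠ [] := by
        intro h
        rw [← c.length_edges, h] at h3
        simp at h3
      obtain ⟨f, hf⟩ := List.exists_mem_of_ne_nil _ hne
      have hfe : f ∈ G.edgeSet := c.edges_subset_edgeSet hf
      have hpos : G.edgeSet.Nonempty := ⟨f, hfe⟩
      rw [← Set.ncard_pos (Set.toFinite _)] at hpos
      omega
    exact le_of_eq (tree_case G hG.1 hac)
  | succ N ih =>
    intro V _ G hm hG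
    classical
    by_cases hac : G.IsAcyclic
    · exact le_of_eq (tree_case G hG.1 hac)
    · rw [SimpleGraph.IsAcyclic] at hac
      push_neg at hac
      obtain ⟨u, w, hw⟩ := hac
      -- pick an edge on the cycle
      have hnodup : w.edges.Nodup := hw.isTrail.edges_nodup
      have hlen : 3 ≤ w.edges.length := by rw [w.length_edges]; exact hw.three_le_length
      have hcard : 3 ≤ w.edges.toFinset.card := by
        rw [List.toFinset_card_of_nodup hnodup]; exact hlen
      obtain ⟨e, he_mem'⟩ := Finset.card_pos.mp (by omega : 0 < w.edges.toFinset.card)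
      have he_mem : e ∈ w.edges := List.mem_toFinset.mp he_mem'
      obtain ⟨f₁, hf₁'⟩ := Finset.card_pos.mp
        (by rw [Finset.card_erase_of_mem he_mem']; omega : 0 < (w.edges.toFinset.erase e).card)
      obtain ⟨f₂, hf₂'⟩ := Finset.card_pos.mp
        (by rw [Finset.card_erase_of_mem hf₁', Finset.card_erase_of_mem he_mem']; omega :
          0 < ((w.edges.toFinset.erase e).erase f₁).card)
      have hf₂f₁ : f₂ ≠ f₁ := (Finset.mem_erase.mp hf₂').1
      have hf₁e : f₁ ≠ e := (Finset.mem_erase.mp hf₁').1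
      have hf₂e : f₂ ≠ e := (Finset.mem_erase.mp (Finset.mem_erase.mp hf₂').2).1
      have hf₁w : f₁ ∈ w.edges := List.mem_toFinset.mp (Finset.mem_erase.mp hf₁').2
      have hf₂w : f₂ ∈ w.edges :=
        List.mem_toFinset.mp (Finset.mem_erase.mp (Finset.mem_erase.mp hf₂').2).2
      have he : e ∈ G.edgeSet := w.edges_subset_edgeSet he_mem
      set G' : SimpleGraph V := G \ fromEdgeSet {e} with hG'def
      have hE' : G'.edgeSet = G.edgeSet \ {e} := edgeSet_sdiff_single' G e he
      have hle : G' ≤ G := sdiff_le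
      -- e is not a bridge of G
      have henb : ¬ G.IsBridge e := by
        rw [isBridge_iff_mem_and_forall_cycle_notMem he]
        push_neg
        exact ⟨u, w, hw, he_mem⟩
      -- transfer of cycles from G' to G
      have htrans : ∀ {x : V} (p : G'.Walk x x), p.IsCycle →
          ∃ (q : G.Walk x x), q.IsCycle ∧ q.edges = p.edges := by
        intro x p hp
        have hsub : ∀ f ∈ p.edges, f ∈ G.edgeSet :=
          fun f hf => (edgeSet_subset_edgeSet.mpr hle) (p.edges_subset_edgeSet hf)
        exact ⟨p.transfer G hsub, hp.transfer hsub, p.edges_transfer hsub⟩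
      -- G' is a cactus
      have hG'cactus : IsCactus G' := by
        constructor
        · exact connected_sdiff hG.1 he henb
        · rintro s₁ ⟨x₁, p₁, hp₁, rfl⟩ s₂ ⟨x₂, p₂, hp₂, rfl⟩ hne
          obtain ⟨q₁, hq₁, he₁⟩ := htrans p₁ hp₁
          obtain ⟨q₂, hq₂, he₂⟩ := htrans p₂ hp₂
          have hres := hG.2 _ ⟨x₁, q₁, hq₁, rfl⟩ _ ⟨x₂, q₂, hq₂, rfl⟩
            (by rw [he₁, he₂]; exact hne)
          rw [he₁, he₂] at hres
          exact hres
      -- edge count of G'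
      have hm1 : 1 ≤ G.edgeSet.ncard := by
        have : G.edgeSet.Nonempty := ⟨e, he⟩
        rw [← Set.ncard_pos (Set.toFinite _)] at this
        omega
      have hm' : G'.edgeSet.ncard = G.edgeSet.ncard - 1 := by
        rw [hE', Set.ncard_diff_singleton_of_mem he]
      -- bridges of G are bridges of G'
      have hbr1 : ∀ g, G.IsBridge g → G'.IsBridge g := by
        intro g hg
        have hgE : g ∈ G.edgeSet := bridge_mem' hG.1 hg
        rw [isBridge_iff_mem_and_forall_cycle_notMem hgE] at hg
        have hge : g ≠ e := by
          rintro rfl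
          exact hg w hw he_mem
        rw [isBridge_iff_mem_and_forall_cycle_notMem (by rw [hE']; exact ⟨hgE, hge⟩)]
        intro x p hp hmem
        obtain ⟨q, hq, heq⟩ := htrans p hp
        exact hg q hq (heq ▸ hmem)
      -- cycle edges other than e become bridges of G'
      have hbr2 : ∀ g, g ∈ w.edges → g ≠ e → G'.IsBridge g := by
        intro g hgw hge
        rw [isBridge_iff_mem_and_forall_cycle_notMem
          (by rw [hE']; exact ⟨w.edges_subset_edgeSet hgw, hge⟩)]
        intro x p hp hmem
        obtain ⟨q, hq, heq⟩ := htrans p hp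
        have hsets := hG.2 _ ⟨x, q, hq, rfl⟩ _ ⟨u, w, hw, rfl⟩
          ⟨g, by rw [heq]; exact hmem, hgw⟩
        have heq' : e ∈ q.edges := by
          have hh : e ∈ {f | f ∈ w.edges} := he_mem
          rw [← hsets] at hh
          exact hh
        have hcontra : e ∈ G'.edgeSet := p.edges_subset_edgeSet (heq ▸ heq')
        rw [hE'] at hcontra
        exact hcontra.2 rfl
      -- edges on the cycle are not bridges of G
      have hnb : ∀ g, g ∈ w.edges → ¬ G.IsBridge g := by
        intro g hgw hg
        rw [isBridge_iff_mem_and_forall_cycle_notMem (w.edges_subset_edgeSet hgw)] at hg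
        exact hg w hw hgw
      -- bridge count comparison
      have hfin : {g : Sym2 V | G.IsBridge g}.Finite :=
        Set.Finite.subset (Set.toFinite G.edgeSet) (fun g hg => bridge_mem' hG.1 hg)
      have hfin' : {g : Sym2 V | G'.IsBridge g}.Finite :=
        Set.Finite.subset (Set.toFinite G'.edgeSet) (fun g hg => bridge_mem' hG'cactus.1 hg)
      have hbb : bridgeCount G + 2 ≤ bridgeCount G' := by
        have hsub : insert f₁ (insert f₂ {g : Sym2 V | G.IsBridge g})
            ⊆ {g : Sym2 V | G'.IsBridge g} := by
          rintro g (rfl | rfl | hg)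
          · exact hbr2 g hf₁w hf₁e
          · exact hbr2 g hf₂w hf₂e
          · exact hbr1 g hg
        have h1 : f₂ ∉ {g : Sym2 V | G.IsBridge g} := hnb f₂ hf₂w
        have h2 : f₁ ∉ insert f₂ {g : Sym2 V | G.IsBridge g} := by
          rintro (rfl | hg)
          · exact hf₂f₁ rfl
          · exact hnb f₁ hf₁w hg
        calc bridgeCount G + 2
            = (insert f₁ (insert f₂ {g : Sym2 V | G.IsBridge g})).ncard := by
              rw [Set.ncard_insert_of_notMem h2 (hfin.insert f₂),
                Set.ncard_insert_of_notMem h1 hfin, bridgeCount]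
          _ ≤ bridgeCount G' := Set.ncard_le_ncard hsub hfin'
      -- apply induction hypothesis
      have hIH := ih G' (by omega) hG'cactus
      rw [hm'] at hIH
      omega

end Aux

/-- A cactus graph with `n` vertices, `m` edges and `b` bridges
satisfies `m ≤ ⌊(3(n-1) - b)/2⌋`. -/
theorem stmt3 {V : Type*} [Fintype V] (G : SimpleGraph V) (hG : IsCactus G) :
    G.edgeSet.ncard ≤ (3 * (Fintype.card V - 1) - bridgeCount G) / 2 := by
  have h := key_lemma G.edgeSet.ncard G le_rfl hG
  omega
end

section
/- Let G be a cactus graph with n > 2 vertices and b bridges, and let d be its degree sequence. Then b ≥ β, where β = max{μ_1, (μ_1+μ_odd)/2}. -/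
open Finset SimpleGraph

open scoped Classical

lemma gdeg_eq {V : Type*} [Fintype V] (G : SimpleGraph V) (v : V) :
    gdeg G v = G.degree v := by
  classical
  rw [gdeg, Set.ncard_eq_toFinset_card', ← SimpleGraph.neighborFinset_def]
  exact congrArg Finset.card (by ext; simp)

lemma even_filter_cycle {V : Type*} [Fintype V] [DecidableEq V] (G : SimpleGraph V)
    (v : V) {u : V} (w : G.Walk u u) (hw : w.IsCycle) :
    Even ((G.incidenceFinset v).filter (fun e => e ∈ w.edges)).card := by
  have hnd := hw.isTrail.edges_nodup
  have heq : (G.incidenceFinset v).filter (fun e => e ∈ w.edges)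
      = (w.edges.filter (fun e => v ∈ e)).toFinset := by
    ext e
    simp only [Finset.mem_filter, SimpleGraph.mem_incidenceFinset, List.mem_toFinset,
      List.mem_filter, decide_eq_true_eq]
    constructor
    · rintro ⟨he, hew⟩; exact ⟨hew, he.2⟩
    · rintro ⟨hew, hv⟩; exact ⟨⟨w.edges_subset_edgeSet hew, hv⟩, hew⟩
  rw [heq, List.card_toFinset, (hnd.filter _).dedup]
  rw [← List.countP_eq_length_filter]
  exact (hw.isTrail.even_countP_edges_iff v).2 (fun h => absurd rfl h)

lemma exists_bridge_of_odd {V : Type*} [Fintype V] (G : SimpleGraph V)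
    (hG : IsCactus G) {v : V} (h : Odd (gdeg G v)) :
    ∃ e, G.IsBridge e ∧ v ∈ e := by
  classical
  set incF := G.incidenceFinset v with hincF
  have hcard : incF.card = gdeg G v := by
    rw [gdeg_eq]; exact G.card_incidenceFinset_eq_degree v
  set N := incF.filter (fun e => ¬ G.IsBridge e) with hN
  set B := incF.filter (fun e => G.IsBridge e) with hB
  have hsplit : B.card + N.card = incF.card := Finset.card_filter_add_card_filter_not _
  -- choice of cycle edge set through a non-bridge edge
  have hg : ∀ e ∈ N, ∃ s ∈ cycleEdgeSets G, e ∈ s := by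
    intro e he
    rw [hN, Finset.mem_filter, SimpleGraph.mem_incidenceFinset] at he
    have heE : e ∈ G.edgeSet := he.1.1
    have hnb := he.2
    rw [SimpleGraph.isBridge_iff_mem_and_forall_cycle_notMem heE] at hnb
    push_neg at hnb
    obtain ⟨u, p, hp, hep⟩ := hnb
    exact ⟨{e' | e' ∈ p.edges}, ⟨u, p, hp, rfl⟩, hep⟩
  set g : Sym2 V → Set (Sym2 V) := fun e =>
    if h : ∃ s ∈ cycleEdgeSets G, e ∈ s then h.choose else ∅ with hgdef
  have hg1 : ∀ e ∈ N, g e ∈ cycleEdgeSets G ∧ e ∈ g e := by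
    intro e he
    have := hg e he
    simp only [hgdef, dif_pos this]
    exact ⟨this.choose_spec.1, this.choose_spec.2⟩
  -- unique cycle through an edge
  have huniq : ∀ e, ∀ s ∈ cycleEdgeSets G, e ∈ s → ∀ s' ∈ cycleEdgeSets G, e ∈ s' → s = s' := by
    intro e s hs hes s' hs' hes'
    exact hG.2 s hs s' hs' ⟨e, hes, hes'⟩
  set T := N.image g with hT
  have hbu : N = T.biUnion (fun s => incF.filter (fun e => e ∈ s)) := by
    ext e
    simp only [Finset.mem_biUnion, hT, Finset.mem_image]
    constructor
    · intro he
      refine ⟨g e, ⟨e, he, rfl⟩, ?_⟩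
      rw [Finset.mem_filter]
      exact ⟨(Finset.mem_filter.1 he).1, (hg1 e he).2⟩
    · rintro ⟨s, ⟨e', he', rfl⟩, hef⟩
      rw [Finset.mem_filter] at hef
      obtain ⟨hei, hes⟩ := hef
      rw [hN, Finset.mem_filter]
      refine ⟨hei, ?_⟩
      obtain ⟨hs, _⟩ := hg1 e' he'
      obtain ⟨u, p, hp, hsEq⟩ := hs
      rw [hsEq] at hes
      rw [SimpleGraph.isBridge_iff_mem_and_forall_cycle_notMem (p.edges_subset_edgeSet hes)]
      push_neg
      exact ⟨u, p, hp, hes⟩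
  have hdisj : ∀ s₁ ∈ T, ∀ s₂ ∈ T, s₁ ≠ s₂ →
      Disjoint (incF.filter (fun e => e ∈ s₁)) (incF.filter (fun e => e ∈ s₂)) := by
    intro s₁ hs₁ s₂ hs₂ hne
    rw [Finset.disjoint_left]
    intro e he1 he2
    rw [Finset.mem_filter] at he1 he2
    obtain ⟨e₁, he₁, rfl⟩ := Finset.mem_image.1 hs₁
    obtain ⟨e₂, he₂, rfl⟩ := Finset.mem_image.1 hs₂
    exact hne (huniq e _ (hg1 e₁ he₁).1 he1.2 _ (hg1 e₂ he₂).1 he2.2)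
  have hNeven : Even N.card := by
    rw [hbu, Finset.card_biUnion hdisj]
    apply Finset.even_sum
    intro s hs
    obtain ⟨e', he', rfl⟩ := Finset.mem_image.1 hs
    obtain ⟨u, p, hp, hseq⟩ := (hg1 e' he').1
    have : incF.filter (fun e => e ∈ g e') = incF.filter (fun e => e ∈ p.edges) := by
      apply Finset.filter_congr; intro e _; rw [hseq]; simp [Set.mem_setOf_eq]
    rw [this]
    exact even_filter_cycle G v p hp
  have hBodd : Odd B.card := by
    rcases Nat.even_or_odd B.card with he | ho
    · exfalso
      have : Even (incF.card) := by rw [← hsplit]; exact he.add hNeven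
      rw [hcard] at this
      exact (Nat.not_even_iff_odd.2 h) this
    · exact ho
  have hBne : B.Nonempty := by
    rw [← Finset.card_pos]
    rcases hBodd with ⟨k, hk⟩; omega
  obtain ⟨e, he⟩ := hBne
  rw [hB, Finset.mem_filter, SimpleGraph.mem_incidenceFinset] at he
  exact ⟨e, he.2, he.1.2⟩

lemma no_double_leaf {V : Type*} [Fintype V] (G : SimpleGraph V) (hconn : G.Connected)
    (hn : 2 < Fintype.card V) {v w : V} (hadj : G.Adj v w)
    (hv : gdeg G v = 1) (hw : gdeg G w = 1) : False := by
  classical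
  have hNv : G.neighborSet v = {w} := by
    obtain ⟨a, ha⟩ := Set.ncard_eq_one.1 hv
    have : w ∈ G.neighborSet v := hadj
    rw [ha] at this
    rw [ha, Set.mem_singleton_iff.1 this]
  have hNw : G.neighborSet w = {v} := by
    obtain ⟨a, ha⟩ := Set.ncard_eq_one.1 hw
    have : v ∈ G.neighborSet w := hadj.symm
    rw [ha] at this
    rw [ha, Set.mem_singleton_iff.1 this]
  have hstep : ∀ x ∈ ({v, w} : Set V), ∀ y, G.Adj x y → y ∈ ({v, w} : Set V) := by
    rintro x (rfl | hx) y hxy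
    · have : y ∈ G.neighborSet x := hxy
      rw [hNv] at this
      right; exact this
    · rw [Set.mem_singleton_iff] at hx; subst hx
      have : y ∈ G.neighborSet x := hxy
      rw [hNw] at this
      left; exact this
  have hclosed : ∀ {x y : V} (_ : G.Walk x y), x ∈ ({v, w} : Set V) → y ∈ ({v, w} : Set V) := by
    intro x y p
    induction p with
    | nil => exact id
    | @cons a b c hab q ih => intro hx; exact ih (hstep a hx b hab)
  have hlt : ({v, w} : Finset V).card < (Finset.univ : Finset V).card := by
    rw [Finset.card_univ]
    calc ({v, w} : Finset V).card ≤ 2 := Finset.card_insert_le _ _ |>.trans (by simp)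
    _ < Fintype.card V := hn
  have hne : ({v, w} : Finset V) ≠ Finset.univ := fun h => by rw [h] at hlt; omega
  obtain ⟨u, hu⟩ : ∃ u, u ∉ ({v, w} : Finset V) := by
    by_contra hc
    push_neg at hc
    exact hne (Finset.eq_univ_iff_forall.2 hc)
  obtain ⟨p⟩ := hconn v u
  have := hclosed p (by left; rfl)
  apply hu
  rcases this with h | h
  · simp [h]
  · simp only [Set.mem_singleton_iff] at h; simp [h]

/-- A cactus graph with `n > 2` vertices has at least
`β = max {μ₁, (μ₁ + μ_odd)/2}` bridges. -/
theorem stmt5 {V : Type*} [Fintype V] (G : SimpleGraph V) (hG : IsCactus G)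
    (hn : 2 < Fintype.card V) :
    graphBeta G ≤ bridgeCount G := by
  classical
  have hV : Nonempty V := Fintype.card_pos_iff.1 (by omega)
  set Bf : Finset (Sym2 V) := Finset.univ.filter (fun e => G.IsBridge e) with hBf
  have hbc : bridgeCount G = Bf.card := by
    rw [bridgeCount, Set.ncard_eq_toFinset_card', hBf]
    congr 1; ext e; simp
  set D1 : Finset V := Finset.univ.filter (fun v => gdeg G v = 1) with hD1
  have hm1 : gmu1 G = D1.card := by
    rw [gmu1, Set.ncard_eq_toFinset_card', hD1]; congr 1; ext v; simp
  set DOdd : Finset V := Finset.univ.filter (fun v => Odd (gdeg G v) ∧ 1 < gdeg G v) with hDOdd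
  have hmo : gmuOdd G = DOdd.card := by
    rw [gmuOdd, Set.ncard_eq_toFinset_card', hDOdd]; congr 1; ext v; simp
  set DO : Finset V := Finset.univ.filter (fun v => Odd (gdeg G v)) with hDO
  haveI : Nonempty (Sym2 V) := ⟨s(hV.some, hV.some)⟩
  -- the chosen incident bridge
  set f : V → Sym2 V := fun v =>
    if h : ∃ e, G.IsBridge e ∧ v ∈ e then h.choose else Classical.arbitrary _ with hfdef
  have hf : ∀ v, Odd (gdeg G v) → G.IsBridge (f v) ∧ v ∈ f v := by
    intro v hv
    have h := exists_bridge_of_odd G hG hv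
    simp only [hfdef, dif_pos h]
    exact h.choose_spec
  -- μ₁ ≤ b
  have h1 : D1.card ≤ Bf.card := by
    apply Finset.card_le_card_of_injOn f
    · intro v hv
      rw [hD1, Finset.mem_coe, Finset.mem_filter] at hv
      have := hf v (hv.2 ▸ odd_one)
      rw [hBf, Finset.mem_coe, Finset.mem_filter]
      exact ⟨Finset.mem_univ _, this.1⟩
    · intro v hv w hw hvw
      by_contra hne
      have hv2 : gdeg G v = 1 := by simpa [hD1] using hv
      have hw2 : gdeg G w = 1 := by simpa [hD1] using hw
      have hfv := hf v (hv2 ▸ odd_one)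
      have hfw := hf w (hw2 ▸ odd_one)
      have hmem : v ∈ f v ∧ w ∈ f v := ⟨hfv.2, hvw ▸ hfw.2⟩
      have heq : f v = s(v, w) := (Sym2.mem_and_mem_iff hne).1 hmem
      have hadj : G.Adj v w := by
        have hE := hfv.1
        rw [heq] at hE
        exact hE.reachable_iff_adj.1 (hG.1.preconnected v w)
      exact no_double_leaf G hG.1 hn hadj hv2 hw2
  -- μ₁ + μ_odd = #DO
  have hsum : D1.card + DOdd.card = DO.card := by
    rw [← Finset.card_union_of_disjoint]
    · congr 1
      ext v
      simp only [hD1, hDOdd, hDO, Finset.mem_union, Finset.mem_filter, Finset.mem_univ, true_and]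
      constructor
      · rintro (h | h)
        · rw [h]; exact odd_one
        · exact h.1
      · intro h
        rcases Nat.lt_or_ge 1 (gdeg G v) with hlt | hle
        · right; exact ⟨h, hlt⟩
        · left
          have : gdeg G v ≠ 0 := by rintro h0; rw [h0] at h; simp at h
          omega
    · rw [Finset.disjoint_left]
      intro v hv hv'
      rw [hD1, Finset.mem_filter] at hv
      rw [hDOdd, Finset.mem_filter] at hv'
      omega
  -- #DO ≤ 2 b
  have h2 : DO.card ≤ 2 * Bf.card := by
    apply Finset.card_le_mul_card_image_of_maps_to (f := f)
    · intro v hv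
      rw [hDO, Finset.mem_filter] at hv
      rw [hBf, Finset.mem_filter]
      exact ⟨Finset.mem_univ _, (hf v hv.2).1⟩
    · intro e _
      have hsub : DO.filter (fun v => f v = e) ⊆ Finset.univ.filter (fun v => v ∈ e) := by
        intro v hv
        rw [Finset.mem_filter] at hv ⊢
        obtain ⟨hv1, hv2⟩ := hv
        rw [hDO, Finset.mem_filter] at hv1
        exact ⟨Finset.mem_univ _, hv2 ▸ (hf v hv1.2).2⟩
      refine (Finset.card_le_card hsub).trans ?_
      induction e using Sym2.ind with
      | _ a b =>
        refine (Finset.card_le_card (fun v hv => ?_)).trans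
          (Finset.card_insert_le a {b} |>.trans (by simp))
        rw [Finset.mem_filter, Sym2.mem_iff] at hv
        rcases hv.2 with rfl | rfl
        · exact Finset.mem_insert_self _ _
        · exact Finset.mem_insert_of_mem (Finset.mem_singleton_self _)
  rw [graphBeta, hbc, hm1, hmo]
  apply max_le h1
  calc (D1.card + DOdd.card) / 2 = DO.card / 2 := by rw [hsum]
  _ ≤ (2 * Bf.card) / 2 := Nat.div_le_div_right h2
  _ = Bf.card := Nat.mul_div_cancel_left _ (by norm_num)
end

section
/- Let G be a cactus graph with n vertices and m edges, and let d be its degree sequence. Then m ≤ ⌊(3(n−1) − β)/2⌋, where β = max{μ_1, (μ_1+μ_odd)/2}. -/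
open Finset SimpleGraph

/-! ### Auxiliary lemmas -/

section Counting
variable {α : Type*} [Finite α]

lemma aux_sUnion_le_two (T : Set (Set α)) (h : ∀ t ∈ T, t.ncard ≤ 2) :
    (⋃₀ T).ncard ≤ 2 * T.ncard := by
  refine Set.Finite.induction_on
    (motive := fun T _ => (∀ t ∈ T, t.ncard ≤ 2) → (⋃₀ T).ncard ≤ 2 * T.ncard)
    T (Set.toFinite T) (by simp) ?_ h
  intro a s ha hs ih h
  rw [Set.sUnion_insert, Set.ncard_insert_of_notMem ha]
  calc (a ∪ ⋃₀ s).ncard ≤ a.ncard + (⋃₀ s).ncard := Set.ncard_union_le _ _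
    _ ≤ 2 + 2 * s.ncard :=
      add_le_add (h a (Set.mem_insert _ _)) (ih fun t ht => h t (Set.mem_insert_of_mem _ ht))
    _ = 2 * (s.ncard + 1) := by ring

lemma aux_sUnion_eq_two (T : Set (Set α)) (hp : T.Pairwise Disjoint)
    (h : ∀ t ∈ T, t.ncard = 2) : (⋃₀ T).ncard = 2 * T.ncard := by
  refine Set.Finite.induction_on
    (motive := fun T _ => T.Pairwise Disjoint → (∀ t ∈ T, t.ncard = 2) →
      (⋃₀ T).ncard = 2 * T.ncard)
    T (Set.toFinite T) (by simp) ?_ hp h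
  intro a s ha hs ih hp h
  rw [Set.sUnion_insert, Set.ncard_insert_of_notMem ha]
  have hd : Disjoint a (⋃₀ s) := Set.disjoint_sUnion_right.2 fun t ht =>
    hp (Set.mem_insert _ _) (Set.mem_insert_of_mem _ ht) (fun h' => ha (h' ▸ ht))
  rw [Set.ncard_union_eq hd, h a (Set.mem_insert _ _),
    ih (hp.mono (Set.subset_insert _ _)) (fun t ht => h t (Set.mem_insert_of_mem _ ht))]
  ring

lemma aux_le_sUnion_three (T : Set (Set α)) (hp : T.Pairwise Disjoint)
    (h : ∀ t ∈ T, 3 ≤ t.ncard) : 3 * T.ncard ≤ (⋃₀ T).ncard := by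
  refine Set.Finite.induction_on
    (motive := fun T _ => T.Pairwise Disjoint → (∀ t ∈ T, 3 ≤ t.ncard) →
      3 * T.ncard ≤ (⋃₀ T).ncard)
    T (Set.toFinite T) (by simp) ?_ hp h
  intro a s ha hs ih hp h
  rw [Set.sUnion_insert, Set.ncard_insert_of_notMem ha]
  have hd : Disjoint a (⋃₀ s) := Set.disjoint_sUnion_right.2 fun t ht =>
    hp (Set.mem_insert _ _) (Set.mem_insert_of_mem _ ht) (fun h' => ha (h' ▸ ht))
  rw [Set.ncard_union_eq hd]
  have h1 := ih (hp.mono (Set.subset_insert _ _)) (fun t ht => h t (Set.mem_insert_of_mem _ ht))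
  have h2 := h a (Set.mem_insert _ _)
  omega

end Counting

section CycLemmas
variable {V : Type*} {G : SimpleGraph V}

lemma mem_support_of_mem_edges'' {a b v : V} {p : G.Walk a b} {e : Sym2 V}
    (he : e ∈ p.edges) (hv : v ∈ e) : v ∈ p.support := by
  induction e with
  | _ x y =>
    rcases Sym2.mem_iff.mp hv with rfl | rfl
    · exact p.fst_mem_support_of_mem_edges he
    · exact p.snd_mem_support_of_mem_edges he

lemma adj_of_mem_edge {e : Sym2 V} (he : e ∈ G.edgeSet) {v1 v2 : V}
    (h1 : v1 ∈ e) (h2 : v2 ∈ e) (hne : v1 ≠ v2) : G.Adj v1 v2 := by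
  induction e with
  | _ a b =>
    rcases Sym2.mem_iff.mp h1 with rfl | rfl <;> rcases Sym2.mem_iff.mp h2 with rfl | rfl
    · exact absurd rfl hne
    · exact (SimpleGraph.mem_edgeSet G).mp he
    · exact ((SimpleGraph.mem_edgeSet G).mp he).symm
    · exact absurd rfl hne

lemma sym2_mem_ncard_le (e : Sym2 V) : {v | v ∈ e}.ncard ≤ 2 := by
  induction e with
  | _ a b =>
    have h : {v | v ∈ s(a, b)} = insert a {b} := by
      ext v; simp [Sym2.mem_iff]
    rw [h]
    exact (Set.ncard_insert_le _ _).trans (by simp)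

lemma edges_filter_end [DecidableEq V] {x z : V} (p : G.Walk x z) (hx : x ≠ z)
    (hnd : p.support.Nodup) :
    (p.edges.filter (fun e => z ∈ e)).length = 1 := by
  induction p with
  | nil => exact absurd rfl hx
  | @cons a y b h q ih =>
    rw [SimpleGraph.Walk.support_cons, List.nodup_cons] at hnd
    cases q with
    | nil =>
      simp
    | @cons c d e h' r =>
      have hy : y ≠ b := by
        rintro rfl
        have h2 : y ∉ r.support ∧ r.support.Nodup := by
          have := hnd.2
          rw [SimpleGraph.Walk.support_cons, List.nodup_cons] at this
          exact this
        exact h2.1 (SimpleGraph.Walk.end_mem_support r)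
      have hz : b ∉ s(a, y) := by
        rw [Sym2.mem_iff]
        rintro (rfl | rfl)
        · exact hx rfl
        · exact hy rfl
      rw [SimpleGraph.Walk.edges_cons, List.filter_cons_of_neg (by simpa using hz)]
      exact ih hy hnd.2

lemma cycle_edges_filter_two [DecidableEq V] {u v : V} {w : G.Walk u u} (hw : w.IsCycle)
    (hv : v ∈ w.support) :
    (w.edges.filter (fun e => v ∈ e)).length = 2 := by
  have hperm := ((w.rotate_edges v hv).perm.filter (fun e => v ∈ e)).length_eq
  rw [← hperm]
  have hc : (w.rotate v hv).IsCycle := hw.rotate hv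
  generalize (w.rotate v hv) = w' at hc ⊢
  cases w' with
  | nil => exact absurd hc (by simp [SimpleGraph.Walk.isCycle_def])
  | @cons a y b h p =>
    have hnd : p.support.Nodup := by
      have := hc.2
      simpa using this
    have hy : y ≠ v := fun hyv => G.irrefl (hyv ▸ h)
    rw [SimpleGraph.Walk.edges_cons, List.filter_cons_of_pos (by simp)]
    rw [List.length_cons, edges_filter_end p hy hnd]

lemma cycleEdgeSets_subset {s : Set (Sym2 V)} (hs : s ∈ cycleEdgeSets G) :
    s ⊆ G.edgeSet := by
  obtain ⟨u, w, hw, rfl⟩ := hs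
  exact fun e he => w.edges_subset_edgeSet he

lemma cycleEdgeSets_three_le {s : Set (Sym2 V)} (hs : s ∈ cycleEdgeSets G) :
    3 ≤ s.ncard := by
  classical
  obtain ⟨u, w, hw, rfl⟩ := hs
  have h1 : {e | e ∈ w.edges} = ↑w.edges.toFinset := by ext e; simp
  rw [h1, Set.ncard_coe_finset, List.toFinset_card_of_nodup hw.edges_nodup,
    SimpleGraph.Walk.length_edges]
  exact hw.three_le_length

lemma cycleEdgeSets_at_two {s : Set (Sym2 V)} (hs : s ∈ cycleEdgeSets G) {v : V}
    (hv : ∃ e ∈ s, v ∈ e) : {e ∈ s | v ∈ e}.ncard = 2 := by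
  classical
  obtain ⟨u, w, hw, rfl⟩ := hs
  obtain ⟨e, he, hve⟩ := hv
  have hsup : v ∈ w.support := mem_support_of_mem_edges'' he hve
  have h1 : {e ∈ {e | e ∈ w.edges} | v ∈ e} = ↑(w.edges.filter (fun e => v ∈ e)).toFinset := by
    ext e; simp [List.mem_filter]
  rw [h1, Set.ncard_coe_finset,
    List.toFinset_card_of_nodup (hw.edges_nodup.filter _),
    cycle_edges_filter_two hw hsup]

lemma gdeg_eq_incidence (v : V) : gdeg G v = {e | e ∈ G.edgeSet ∧ v ∈ e}.ncard := by
  have himg : (fun u => s(v, u)) '' G.neighborSet v = {e | e ∈ G.edgeSet ∧ v ∈ e} := by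
    ext e
    constructor
    · rintro ⟨u, hu, rfl⟩
      exact ⟨hu, Sym2.mem_mk_left v u⟩
    · rintro ⟨he, hv⟩
      obtain ⟨u, rfl⟩ := Sym2.mem_iff_exists.mp hv
      exact ⟨u, he, rfl⟩
  rw [gdeg, ← himg,
    Set.ncard_image_of_injective _ (fun a b hab => Sym2.congr_right.mp hab)]

end CycLemmas

section ConnLemmas
variable {V : Type*} {G H : SimpleGraph V}

lemma reach_of_walk (h : ∀ a b, G.Adj a b → H.Reachable a b) :
    ∀ {a b : V}, G.Walk a b → H.Reachable a b := by
  intro a b w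
  induction w with
  | nil => exact Reachable.refl _
  | cons hadj p ih => exact (h _ _ hadj).trans ih

lemma connected_of_forall_adj (hG : G.Connected) (h : ∀ a b, G.Adj a b → H.Reachable a b) :
    H.Connected := by
  have hne := hG.nonempty
  exact ⟨fun a b => (hG.preconnected a b).elim fun w => reach_of_walk h w⟩

lemma not_bridge_connected (hc : H.Connected) {e : Sym2 V}
    (he : e ∈ H.edgeSet) (hb : ¬ H.IsBridge e) : (H \ fromEdgeSet {e}).Connected := by
  induction e with
  | _ u v =>
    rw [isBridge_iff] at hb
    push_neg at hb
    have hr : (H \ fromEdgeSet {s(u, v)}).Reachable u v := hb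
    refine connected_of_forall_adj hc fun a b hab => ?_
    by_cases hcase : s(a, b) = s(u, v)
    · rcases Sym2.eq_iff.mp hcase with ⟨rfl, rfl⟩ | ⟨rfl, rfl⟩
      · exact hr
      · exact hr.symm
    · refine Adj.reachable ?_
      rw [sdiff_adj, fromEdgeSet_adj]
      exact ⟨hab, fun hmem => hcase hmem.1⟩

end ConnLemmas

section MainLemmas
variable {V : Type*} [Fintype V] {G : SimpleGraph V}

lemma odd_deg_bridge (hG : IsCactus G) {v : V} (hv : Odd (gdeg G v)) :
    ∃ e, G.IsBridge e ∧ v ∈ e := by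
  classical
  by_contra hno
  push_neg at hno
  set T : Set (Set (Sym2 V)) :=
    (fun s => {e ∈ s | v ∈ e}) '' {s | s ∈ cycleEdgeSets G ∧ ∃ e ∈ s, v ∈ e} with hT
  have hIT : {e | e ∈ G.edgeSet ∧ v ∈ e} = ⋃₀ T := by
    ext e
    constructor
    · rintro ⟨he, hve⟩
      have hb : ¬ G.IsBridge e := fun hb => hno e hb hve
      rw [isBridge_iff_mem_and_forall_cycle_notMem he] at hb
      push_neg at hb
      obtain ⟨u, w, hw, hew⟩ := hb
      exact ⟨{e' ∈ {e' | e' ∈ w.edges} | v ∈ e'},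
        ⟨{e' | e' ∈ w.edges}, ⟨⟨u, w, hw, rfl⟩, e, hew, hve⟩, rfl⟩, hew, hve⟩
    · rintro ⟨t, ⟨s, ⟨hs, -⟩, rfl⟩, he, hve⟩
      exact ⟨cycleEdgeSets_subset hs he, hve⟩
  have hT2 : ∀ t ∈ T, t.ncard = 2 := by
    rintro t ⟨s, ⟨hs, hex⟩, rfl⟩
    exact cycleEdgeSets_at_two hs hex
  have hTpair : T.Pairwise Disjoint := by
    rintro t1 ⟨s1, ⟨hs1, -⟩, rfl⟩ t2 ⟨s2, ⟨hs2, -⟩, rfl⟩ hne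
    have hss : s1 ≠ s2 := fun h => hne (by rw [h])
    have hdisj : Disjoint s1 s2 := by
      rw [Set.disjoint_iff_inter_eq_empty]
      by_contra hcon
      exact hss (hG.2 s1 hs1 s2 hs2 (Set.nonempty_iff_ne_empty.2 hcon))
    exact hdisj.mono (Set.sep_subset _ _) (Set.sep_subset _ _)
  have hcount := aux_sUnion_eq_two T hTpair hT2
  rw [gdeg_eq_incidence, hIT, hcount] at hv
  obtain ⟨k, hk⟩ := hv
  omega

lemma deg_one_adj (hc : G.Connected) (hn : 2 < Fintype.card V) {v1 v2 : V}
    (h : G.Adj v1 v2) (h1 : gdeg G v1 = 1) (h2 : gdeg G v2 = 1) : False := by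
  classical
  have hn1 : G.neighborSet v1 = {v2} := by
    obtain ⟨a, ha⟩ := Set.ncard_eq_one.mp h1
    have hmem : v2 ∈ G.neighborSet v1 := h
    rw [ha] at hmem ⊢
    rw [Set.mem_singleton_iff] at hmem
    rw [hmem]
  have hn2 : G.neighborSet v2 = {v1} := by
    obtain ⟨a, ha⟩ := Set.ncard_eq_one.mp h2
    have hmem : v1 ∈ G.neighborSet v2 := h.symm
    rw [ha] at hmem ⊢
    rw [Set.mem_singleton_iff] at hmem
    rw [hmem]
  obtain ⟨z, hz1, hz2⟩ : ∃ z, z ≠ v1 ∧ z ≠ v2 := by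
    by_contra hcon
    push_neg at hcon
    have hsub : (Finset.univ : Finset V) ⊆ {v1, v2} := by
      intro x _
      rcases eq_or_ne x v1 with rfl | hx
      · exact Finset.mem_insert_self _ _
      · rw [hcon x hx]
        exact Finset.mem_insert_of_mem (Finset.mem_singleton_self _)
    have hcard := Finset.card_le_card hsub
    rw [Finset.card_univ] at hcard
    have : Fintype.card V ≤ 2 :=
      hcard.trans ((Finset.card_insert_le _ _).trans (by simp))
    omega
  obtain ⟨q⟩ := hc.preconnected v1 z
  obtain ⟨p, hp⟩ := q.toPath
  cases p with
  | nil => exact hz1 rfl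
  | @cons a x b hadj r =>
    have hx : x = v2 := by
      have : x ∈ G.neighborSet v1 := hadj
      rwa [hn1, Set.mem_singleton_iff] at this
    subst hx
    cases r with
    | nil => exact hz2 rfl
    | @cons c y d hadj' r' =>
      have hy : y = v1 := by
        have hymem : y ∈ G.neighborSet _ := hadj'
        rwa [hn2, Set.mem_singleton_iff] at hymem
      subst hy
      have hnd := hp.support_nodup
      rw [SimpleGraph.Walk.support_cons, List.nodup_cons] at hnd
      exact hnd.1 (by
        rw [SimpleGraph.Walk.support_cons]
        exact List.mem_cons_of_mem _ (SimpleGraph.Walk.start_mem_support r'))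

end MainLemmas

/-- A cactus graph (with `n > 2`) satisfies
`m ≤ ⌊(3(n-1) - β)/2⌋` where `β = max {μ₁, (μ₁ + μ_odd)/2}`. -/
theorem stmt6 {V : Type*} [Fintype V] (G : SimpleGraph V) (hG : IsCactus G)
    (hn : 2 < Fintype.card V) :
    G.edgeSet.ncard ≤ (3 * (Fintype.card V - 1) - graphBeta G) / 2 := by
  classical
  obtain ⟨hconn, hcac⟩ := hG
  -- choose a representative edge in each cycle
  have hSne : ∀ s, s ∈ cycleEdgeSets G → ∃ e, e ∈ s := by
    intro s hs
    rcases Set.eq_empty_or_nonempty s with rfl | h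
    · have := cycleEdgeSets_three_le hs
      simp at this
    · exact h
  haveI hVne : Nonempty V := Fintype.card_pos_iff.mp (by omega)
  haveI : Nonempty (Sym2 V) := ⟨s(Classical.arbitrary V, Classical.arbitrary V)⟩
  choose! f hf using hSne
  have hfinj : Set.InjOn f (cycleEdgeSets G) := fun s1 h1 s2 h2 he =>
    hcac s1 h1 s2 h2 ⟨f s1, hf s1 h1, he ▸ hf s2 h2⟩
  have hRsub : f '' cycleEdgeSets G ⊆ G.edgeSet := by
    rintro e ⟨s, hs, rfl⟩
    exact cycleEdgeSets_subset hs (hf s hs)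
  -- removing one edge of each cycle keeps the graph connected
  have key : ∀ t : Finset (Sym2 V), ↑t ⊆ f '' cycleEdgeSets G →
      (G \ fromEdgeSet ↑t).Connected := by
    intro t
    induction t using Finset.induction_on with
    | empty =>
      intro _
      rw [Finset.coe_empty, fromEdgeSet_empty, sdiff_bot]
      exact hconn
    | @insert e t het ih =>
      intro hsub
      have htR : ↑t ⊆ f '' cycleEdgeSets G := fun x hx => hsub (by simp [hx])
      have hcon := ih htR
      have heR : e ∈ f '' cycleEdgeSets G := hsub (by simp)
      obtain ⟨s0, hs0, rfl⟩ := heR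
      obtain ⟨u, w, hw, hseq⟩ := id hs0
      have hfs0 : f s0 ∈ s0 := hf s0 hs0
      have hedges : ∀ a ∈ w.edges, a ∈ (G \ fromEdgeSet ↑t).edgeSet := by
        intro a ha
        rw [edgeSet_sdiff, edgeSet_fromEdgeSet, edgeSet_sdiff_sdiff_isDiag]
        refine ⟨w.edges_subset_edgeSet ha, fun hat => ?_⟩
        obtain ⟨s1, hs1, heq⟩ := htR hat
        have has0 : a ∈ s0 := by rw [hseq]; exact ha
        have hss : s0 = s1 := hcac s0 hs0 s1 hs1 ⟨a, has0, heq ▸ hf s1 hs1⟩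
        rw [← heq, ← hss] at hat
        exact het (by exact_mod_cast hat)
      have hw' : (w.transfer _ hedges).IsCycle := hw.transfer hedges
      have hmemw : f s0 ∈ w.edges := hseq.subset hfs0
      have hnb : ¬ (G \ fromEdgeSet ↑t).IsBridge (f s0) := by
        intro hb
        rw [isBridge_iff_mem_and_forall_cycle_notMem (hedges _ hmemw)] at hb
        exact hb (w.transfer _ hedges) hw'
          (by rw [SimpleGraph.Walk.edges_transfer]; exact hmemw)
      have hee : f s0 ∈ (G \ fromEdgeSet ↑t).edgeSet := hedges _ hmemw
      have hres := not_bridge_connected hcon hee hnb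
      have hgeq : (G \ fromEdgeSet ↑t) \ fromEdgeSet {f s0}
          = G \ fromEdgeSet ↑(insert (f s0) t) := by
        ext a b
        simp only [sdiff_adj, fromEdgeSet_adj, Finset.coe_insert, Set.mem_insert_iff,
          Set.mem_singleton_iff, Finset.mem_coe]
        tauto
      rwa [hgeq] at hres
  have hRfin : (f '' cycleEdgeSets G).Finite := Set.toFinite _
  have hconn' : (G \ fromEdgeSet (f '' cycleEdgeSets G)).Connected := by
    have := key hRfin.toFinset (by rw [Set.Finite.coe_toFinset])
    rwa [Set.Finite.coe_toFinset] at this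
  have hacyc : (G \ fromEdgeSet (f '' cycleEdgeSets G)).IsAcyclic := by
    intro v w' hw'
    have hsubE : ∀ a ∈ w'.edges, a ∈ G.edgeSet := by
      intro a ha
      have h2 := w'.edges_subset_edgeSet ha
      rw [edgeSet_sdiff] at h2
      exact h2.1
    have hw0 : (w'.transfer G hsubE).IsCycle := hw'.transfer hsubE
    have hs : {e | e ∈ w'.edges} ∈ cycleEdgeSets G :=
      ⟨v, w'.transfer G hsubE, hw0, by rw [SimpleGraph.Walk.edges_transfer]⟩
    have hfs : f {e | e ∈ w'.edges} ∈ {e | e ∈ w'.edges} := hf _ hs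
    have hmem := w'.edges_subset_edgeSet hfs
    rw [edgeSet_sdiff, edgeSet_fromEdgeSet, edgeSet_sdiff_sdiff_isDiag] at hmem
    exact hmem.2 ⟨_, hs, rfl⟩
  have htree : (G \ fromEdgeSet (f '' cycleEdgeSets G)).IsTree := ⟨hconn', hacyc⟩
  haveI : Fintype ((G \ fromEdgeSet (f '' cycleEdgeSets G)).edgeSet) := Fintype.ofFinite _
  have hcount := htree.card_edgeFinset
  have hcount' : (G \ fromEdgeSet (f '' cycleEdgeSets G)).edgeSet.toFinset.card + 1
      = Fintype.card V := hcount
  have hncard : (G \ fromEdgeSet (f '' cycleEdgeSets G)).edgeSet.ncard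
      = Fintype.card V - 1 := by
    rw [Set.ncard_eq_toFinset_card']
    omega
  have hEeq : G.edgeSet
      = (G \ fromEdgeSet (f '' cycleEdgeSets G)).edgeSet ∪ f '' cycleEdgeSets G := by
    rw [edgeSet_sdiff, edgeSet_fromEdgeSet, edgeSet_sdiff_sdiff_isDiag,
      Set.diff_union_of_subset hRsub]
  have hdisjE : Disjoint ((G \ fromEdgeSet (f '' cycleEdgeSets G)).edgeSet)
      (f '' cycleEdgeSets G) := by
    rw [edgeSet_sdiff, edgeSet_fromEdgeSet, edgeSet_sdiff_sdiff_isDiag]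
    exact Set.disjoint_sdiff_left
  have hm : G.edgeSet.ncard = (Fintype.card V - 1) + (cycleEdgeSets G).ncard := by
    rw [hEeq, Set.ncard_union_eq hdisjE, hncard, Set.ncard_image_of_injOn hfinj]
  -- bridges and cycles are edge-disjoint
  have hBsub : {e : Sym2 V | G.IsBridge e} ∪ ⋃₀ cycleEdgeSets G ⊆ G.edgeSet :=
    Set.union_subset (fun e he => by induction e with | _ u v => exact he.reachable_iff_adj.1 (hconn.preconnected u v))
      (Set.sUnion_subset fun s hs => cycleEdgeSets_subset hs)
  have hBdisj : Disjoint {e : Sym2 V | G.IsBridge e} (⋃₀ cycleEdgeSets G) :=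
    Set.disjoint_sUnion_right.2 fun s hs => Set.disjoint_left.2 fun e heB hes => by
      obtain ⟨u, w, hw, rfl⟩ := hs
      exact ((isBridge_iff_mem_and_forall_cycle_notMem (w.edges_subset_edgeSet hes)).mp heB) w hw hes
  have hpairS : (cycleEdgeSets G).Pairwise Disjoint := fun s1 h1 s2 h2 hne =>
    Set.disjoint_iff_inter_eq_empty.2 (by
      by_contra hcon
      exact hne (hcac _ h1 _ h2 (Set.nonempty_iff_ne_empty.2 hcon)))
  have h3c := aux_le_sUnion_three _ hpairS (fun t ht => cycleEdgeSets_three_le ht)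
  have hUn : {e : Sym2 V | G.IsBridge e}.ncard + (⋃₀ cycleEdgeSets G).ncard
      ≤ G.edgeSet.ncard := by
    rw [← Set.ncard_union_eq hBdisj]
    exact Set.ncard_le_ncard hBsub (Set.toFinite _)
  have hbc : {e : Sym2 V | G.IsBridge e}.ncard + 3 * (cycleEdgeSets G).ncard
      ≤ G.edgeSet.ncard := by omega
  -- the bridge parameter is at most the number of bridges
  have hodd : ∀ v : V, Odd (gdeg G v) → ∃ e, G.IsBridge e ∧ v ∈ e :=
    fun v hv => odd_deg_bridge ⟨hconn, hcac⟩ hv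
  choose! g hg1 hg2 using hodd
  have hmu1 : gmu1 G ≤ {e : Sym2 V | G.IsBridge e}.ncard := by
    have hinj : Set.InjOn g {v | gdeg G v = 1} := by
      intro v1 h1 v2 h2 he
      by_contra hne
      rw [Set.mem_setOf_eq] at h1 h2
      have hv1 : Odd (gdeg G v1) := by rw [h1]; exact odd_one
      have hv2 : Odd (gdeg G v2) := by rw [h2]; exact odd_one
      exact deg_one_adj hconn hn
        (adj_of_mem_edge (hBsub (Or.inl (hg1 v1 hv1))) (hg2 v1 hv1) (he.symm ▸ hg2 v2 hv2) hne) h1 h2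
    have e1 : gmu1 G = {v | gdeg G v = 1}.ncard := rfl
    rw [e1, ← Set.ncard_image_of_injOn hinj]
    refine Set.ncard_le_ncard ?_ (Set.toFinite _)
    rintro e ⟨u, hu, rfl⟩
    rw [Set.mem_setOf_eq] at hu
    exact hg1 u (by rw [hu]; exact odd_one)
  have hOcard : gmu1 G + gmuOdd G = {v | Odd (gdeg G v)}.ncard := by
    have hunion : {v | gdeg G v = 1} ∪ {v | Odd (gdeg G v) ∧ 1 < gdeg G v}
        = {v | Odd (gdeg G v)} := by
      ext v
      simp only [Set.mem_union, Set.mem_setOf_eq]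
      constructor
      · rintro (h | h)
        · rw [h]; exact odd_one
        · exact h.1
      · intro h
        rcases eq_or_ne (gdeg G v) 1 with h1 | h1
        · exact Or.inl h1
        · refine Or.inr ⟨h, ?_⟩
          obtain ⟨k, hk⟩ := h
          omega
    have hdisj2 : Disjoint {v | gdeg G v = 1} {v | Odd (gdeg G v) ∧ 1 < gdeg G v} :=
      Set.disjoint_left.2 fun v h1 h2 => by
        rw [Set.mem_setOf_eq] at h1
        obtain ⟨-, h2⟩ := h2
        omega
    have e1 : gmu1 G = {v | gdeg G v = 1}.ncard := rfl
    have e2 : gmuOdd G = {v | Odd (gdeg G v) ∧ 1 < gdeg G v}.ncard := rfl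
    rw [e1, e2, ← Set.ncard_union_eq hdisj2, hunion]
  have hOB : {v | Odd (gdeg G v)}.ncard ≤ 2 * {e : Sym2 V | G.IsBridge e}.ncard := by
    have hsub2 : {v | Odd (gdeg G v)} ⊆
        ⋃₀ ((fun e => {v ∈ {v | Odd (gdeg G v)} | g v = e}) '' (g '' {v | Odd (gdeg G v)})) :=
      fun v hv => ⟨_, ⟨g v, ⟨v, hv, rfl⟩, rfl⟩, hv, rfl⟩
    have hT2le : ∀ t ∈ (fun e => {v ∈ {v | Odd (gdeg G v)} | g v = e}) ''
        (g '' {v | Odd (gdeg G v)}), t.ncard ≤ 2 := by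
      rintro t ⟨e, ⟨v0, hv0, rfl⟩, rfl⟩
      have hsubt : {v ∈ {v | Odd (gdeg G v)} | g v = g v0} ⊆ {v | v ∈ (g v0 : Sym2 V)} := by
        rintro v ⟨hvO, hveq⟩
        rw [Set.mem_setOf_eq]
        exact hveq ▸ hg2 v hvO
      exact (Set.ncard_le_ncard hsubt (Set.toFinite _)).trans (sym2_mem_ncard_le _)
    calc {v | Odd (gdeg G v)}.ncard
        ≤ (⋃₀ ((fun e => {v ∈ {v | Odd (gdeg G v)} | g v = e}) ''
            (g '' {v | Odd (gdeg G v)}))).ncard := Set.ncard_le_ncard hsub2 (Set.toFinite _)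
      _ ≤ 2 * ((fun e => {v ∈ {v | Odd (gdeg G v)} | g v = e}) ''
            (g '' {v | Odd (gdeg G v)})).ncard := aux_sUnion_le_two _ hT2le
      _ ≤ 2 * (g '' {v | Odd (gdeg G v)}).ncard :=
            Nat.mul_le_mul_left 2 (Set.ncard_image_le (Set.toFinite _))
      _ ≤ 2 * {e : Sym2 V | G.IsBridge e}.ncard := by
            refine Nat.mul_le_mul_left 2 (Set.ncard_le_ncard ?_ (Set.toFinite _))
            rintro e ⟨v, hv, rfl⟩
            exact hg1 v hv
  have hb2 : gmu1 G + gmuOdd G ≤ 2 * {e : Sym2 V | G.IsBridge e}.ncard := by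
    rw [hOcard]; exact hOB
  have hbeta : graphBeta G ≤ {e : Sym2 V | G.IsBridge e}.ncard := by
    have e3 : graphBeta G = max (gmu1 G) ((gmu1 G + gmuOdd G) / 2) := rfl
    rw [e3]
    exact max_le hmu1 (by omega)
  omega
end

section
/- Let G be a bipartite cactus graph with n ≥ 4 vertices, m edges, and b bridges. Then m ≤ 2·⌊2(n − 1 − b)/3⌋ + b. -/
open Finset SimpleGraph

-- reachability after deleting a reroutable edge
lemma reach_del {V : Type*} {G : SimpleGraph V} {u v : V}
    (h : (G.deleteEdges {s(u,v)}).Reachable u v) :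
    ∀ {a b : V}, G.Reachable a b → (G.deleteEdges {s(u,v)}).Reachable a b := by
  intro a b hab
  obtain ⟨p⟩ := hab
  induction p with
  | nil => rfl
  | @cons x y z hadj q ih =>
    refine Reachable.trans ?_ ih
    by_cases he : s(x, y) = s(u, v)
    · rw [Sym2.eq_iff] at he
      rcases he with ⟨rfl, rfl⟩ | ⟨rfl, rfl⟩
      · exact h
      · exact h.symm
    · refine Adj.reachable ?_
      rw [SimpleGraph.deleteEdges_adj]
      refine ⟨hadj, ?_⟩
      simpa using he

lemma cycleEdgeSets_del_subset {V : Type*} {G : SimpleGraph V} (A : Set (Sym2 V)) :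
    cycleEdgeSets (G.deleteEdges A) ⊆ cycleEdgeSets G := by
  rintro s ⟨u, w, hw, rfl⟩
  have hsub : ∀ e ∈ w.edges, e ∈ G.edgeSet := fun e he =>
    (SimpleGraph.edgeSet_subset_edgeSet.2 (SimpleGraph.deleteEdges_le A))
      (w.edges_subset_edgeSet he)
  exact ⟨u, w.transfer G hsub, hw.transfer hsub, by simp [SimpleGraph.Walk.edges_transfer]⟩

lemma cycleEdgeSets_finite {V : Type*} [Fintype V] (G : SimpleGraph V) :
    (cycleEdgeSets G).Finite := Set.toFinite _

lemma edge_bound {V : Type*} [Fintype V] :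
    ∀ (N : ℕ) (G : SimpleGraph V), G.Connected → numCycles G ≤ N →
      G.edgeSet.ncard ≤ Fintype.card V - 1 + numCycles G := by
  intro N
  induction N with
  | zero =>
    intro G hc hN
    have h0 : numCycles G = 0 := Nat.le_zero.mp hN
    have hempty : cycleEdgeSets G = ∅ :=
      (Set.ncard_eq_zero (cycleEdgeSets_finite G)).mp h0
    have hacyc : G.IsAcyclic := by
      intro v w hw
      have : ({e | e ∈ w.edges} : Set (Sym2 V)) ∈ cycleEdgeSets G := ⟨v, w, hw, rfl⟩
      simp [hempty] at this
    classical
    have htree : G.IsTree := ⟨hc, hacyc⟩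
    have := htree.card_edgeFinset
    rw [h0, Nat.add_zero, ← this]
    rw [Set.ncard_eq_toFinset_card' G.edgeSet]
    simp [SimpleGraph.edgeFinset]
  | succ N ih =>
    intro G hc hN
    by_cases h0 : numCycles G = 0
    · have := ih G hc (by omega)
      omega
    · -- pick a cycle and an edge on it
      have hfin := cycleEdgeSets_finite G
      have hne : (cycleEdgeSets G).Nonempty := by
        rw [Set.nonempty_iff_ne_empty]
        intro hE
        rw [numCycles, hE] at h0; simp at h0
      obtain ⟨s₀, u, w, hw, rfl⟩ := hne
      have hlen : 3 ≤ w.length := hw.three_le_length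
      have hepos : 0 < w.edges.length := by
        rw [SimpleGraph.Walk.length_edges]; omega
      obtain ⟨e, he⟩ := List.exists_mem_of_length_pos hepos
      induction e using Sym2.ind with
      | _ x y =>
      set G' := G.deleteEdges {s(x,y)} with hG'
      have hreach : G'.Reachable x y := by
        have := (SimpleGraph.adj_and_reachable_delete_edges_iff_exists_cycle
          (G := G) (v := x) (w := y)).mpr ⟨u, w, hw, he⟩
        exact this.2
      have hconn' : G'.Connected := by
        rw [SimpleGraph.connected_iff] at hc ⊢
        exact ⟨fun a b => reach_del hreach (hc.1 a b), hc.2⟩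
      have hsub : cycleEdgeSets G' ⊆ cycleEdgeSets G := cycleEdgeSets_del_subset _
      have hnotmem : ({e | e ∈ w.edges} : Set (Sym2 V)) ∉ cycleEdgeSets G' := by
        rintro ⟨u', w', hw', hset⟩
        have : s(x,y) ∈ w'.edges := by
          have : s(x,y) ∈ ({e | e ∈ w.edges} : Set (Sym2 V)) := he
          rw [hset] at this; exact this
        have hmem := w'.edges_subset_edgeSet this
        rw [SimpleGraph.edgeSet_deleteEdges] at hmem
        simp at hmem
      have hss : cycleEdgeSets G' ⊂ cycleEdgeSets G :=
        ⟨hsub, fun hcon => hnotmem (hcon ⟨u, w, hw, rfl⟩)⟩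
      have hlt : numCycles G' < numCycles G := Set.ncard_lt_ncard hss hfin
      have hedge : G'.edgeSet = G.edgeSet \ {s(x,y)} := by
        rw [SimpleGraph.edgeSet_deleteEdges]
      have hmemE : s(x,y) ∈ G.edgeSet := w.edges_subset_edgeSet he
      have hcard' : G'.edgeSet.ncard = G.edgeSet.ncard - 1 := by
        rw [hedge]
        exact Set.ncard_diff_singleton_of_mem hmemE
      have hpos : 0 < G.edgeSet.ncard :=
        Set.ncard_pos (Set.toFinite _) |>.mpr ⟨_, hmemE⟩
      have := ih G' hconn' (by omega)
      omega

lemma walk_parity {V : Type*} {G : SimpleGraph V} (C : G.Coloring (Fin 2)) :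
    ∀ {a b : V} (w : G.Walk a b), (C a = C b ↔ Even w.length) := by
  intro a b w
  induction w with
  | nil => simp
  | @cons x y z hadj q ih =>
    have hxy : C x ≠ C y := C.valid hadj
    simp only [SimpleGraph.Walk.length_cons, Nat.even_add_one, ← ih]
    revert hxy
    generalize C x = p; generalize C y = q'; generalize C z = r
    revert p q' r; decide

lemma cycle_edgeset_ncard {V : Type*} {G : SimpleGraph V} {u : V} {w : G.Walk u u}
    (hw : w.IsCycle) : ({e | e ∈ w.edges} : Set (Sym2 V)).ncard = w.length := by
  classical
  have h1 : ({e | e ∈ w.edges} : Set (Sym2 V)) = ↑w.edges.toFinset := by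
    ext e; simp
  rw [h1, Set.ncard_coe_finset, List.toFinset_card_of_nodup hw.edges_nodup,
    SimpleGraph.Walk.length_edges]

lemma ncard_sUnion_finset {α : Type*} :
    ∀ (F : Finset (Set α)), (∀ s ∈ F, s.Finite) →
      ((F : Set (Set α)).Pairwise Disjoint) →
      (⋃₀ (F : Set (Set α))).ncard = ∑ s ∈ F, s.ncard := by
  classical
  intro F
  induction F using Finset.induction_on with
  | empty => simp
  | @insert s F hs ih =>
    intro hfin hdisj
    have hF : (⋃₀ (F : Set (Set α))).Finite := by
      apply Set.Finite.sUnion (Finset.finite_toSet F)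
      intro t ht; exact hfin t (Finset.mem_insert_of_mem ht)
    have hdF : Disjoint s (⋃₀ (F : Set (Set α))) := by
      rw [Set.disjoint_sUnion_right]
      intro t ht
      exact hdisj (by simp) (by simp [ht]) (by rintro rfl; exact hs ht)
    rw [Finset.coe_insert, Set.sUnion_insert,
      Set.ncard_union_eq hdF (hfin s (Finset.mem_insert_self s F)) hF,
      Finset.sum_insert hs,
      ih (fun t ht => hfin t (Finset.mem_insert_of_mem ht))
        (hdisj.mono (by simp [Set.subset_insert]))]

/-- A bipartite cactus graph with `n ≥ 4` vertices, `m` edges and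
`b` bridges satisfies `m ≤ 2⌊2(n - 1 - b)/3⌋ + b`. -/

theorem stmt7 {V : Type*} [Fintype V] (G : SimpleGraph V) (hG : IsCactus G)
    (hbip : G.Colorable 2) (hn : 4 ≤ Fintype.card V) :
    G.edgeSet.ncard ≤
      2 * (2 * (Fintype.card V - 1 - bridgeCount G) / 3) + bridgeCount G := by
  classical
  obtain ⟨hconn, hcac⟩ := hG
  obtain ⟨C⟩ := hbip
  set B : Set (Sym2 V) := {e | G.IsBridge e} with hB
  have hBsub : B ⊆ G.edgeSet := fun e he => by
    obtain ⟨u, v⟩ := e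
    exact G.mem_edgeSet.mpr
        ((show G.IsBridge s(u, v) from he).reachable_iff_adj.mp (hconn.preconnected u v))
  have hSfin : (cycleEdgeSets G).Finite := Set.toFinite _
  set F : Finset (Set (Sym2 V)) := hSfin.toFinset with hF
  have hFmem : ∀ s, s ∈ F ↔ s ∈ cycleEdgeSets G := fun s => Set.Finite.mem_toFinset _
  -- cover
  have hcover : G.edgeSet \ B = ⋃₀ (F : Set (Set (Sym2 V))) := by
    ext e
    constructor
    · rintro ⟨hmem, hnb⟩
      have : ¬ (e ∈ G.edgeSet ∧ ∀ ⦃u : V⦄ (p : G.Walk u u), p.IsCycle → e ∉ p.edges) := by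
        rw [← SimpleGraph.isBridge_iff_mem_and_forall_cycle_notMem hmem]
        exact fun h => hnb h.2
      push_neg at this
      obtain ⟨u, p, hp, hep⟩ := this hmem
      exact ⟨{e' | e' ∈ p.edges}, (hFmem _).mpr ⟨u, p, hp, rfl⟩, hep⟩
    · rintro ⟨s, hsF, hes⟩
      obtain ⟨u, p, hp, rfl⟩ := (hFmem s).mp hsF
      refine ⟨p.edges_subset_edgeSet hes, ?_⟩
      intro hbr
      exact (SimpleGraph.isBridge_iff_mem_and_forall_cycle_notMem (p.edges_subset_edgeSet hes)).mp hbr p hp hes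
  -- per-cycle facts
  have hprop : ∀ s ∈ F, s.Finite ∧ Even s.ncard ∧ 4 ≤ s.ncard := by
    intro s hsF
    obtain ⟨u, p, hp, rfl⟩ := (hFmem s).mp hsF
    have hcard := cycle_edgeset_ncard hp
    have heven : Even p.length := (walk_parity C p).mp rfl
    have h3 := hp.three_le_length
    obtain ⟨r, hr⟩ := heven
    exact ⟨Set.toFinite _, by rw [hcard]; exact ⟨r, hr⟩, by omega⟩
  have hdisj : ((F : Set (Set (Sym2 V))).Pairwise Disjoint) := by
    intro s hs t ht hst
    rw [Set.disjoint_iff_inter_eq_empty]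
    by_contra hne
    exact hst (hcac s ((hFmem s).mp (by exact_mod_cast hs)) t
      ((hFmem t).mp (by exact_mod_cast ht)) (Set.nonempty_iff_ne_empty.mpr hne))
  have hsum : (G.edgeSet \ B).ncard = ∑ s ∈ F, s.ncard := by
    rw [hcover]
    exact ncard_sUnion_finset F (fun s hs => (hprop s hs).1) hdisj
  have hFcard : F.card = numCycles G := (Set.ncard_eq_toFinset_card _ hSfin).symm
  have h1 : (G.edgeSet \ B).ncard = G.edgeSet.ncard - B.ncard :=
    Set.ncard_diff hBsub (Set.toFinite _)
  have hble : B.ncard ≤ G.edgeSet.ncard := Set.ncard_le_ncard hBsub (Set.toFinite _)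
  have hm : G.edgeSet.ncard ≤ Fintype.card V - 1 + numCycles G :=
    edge_bound (numCycles G) G hconn le_rfl
  have hge : 4 * F.card ≤ ∑ s ∈ F, s.ncard := by
    calc 4 * F.card = ∑ _s ∈ F, 4 := by rw [Finset.sum_const, smul_eq_mul, mul_comm]
    _ ≤ ∑ s ∈ F, s.ncard := Finset.sum_le_sum (fun s hs => (hprop s hs).2.2)
  have heven : Even (∑ s ∈ F, s.ncard) :=
    Finset.sum_induction _ Even (fun _ _ => Even.add) Even.zero
      (fun s hs => (hprop s hs).2.1)
  obtain ⟨r, hr⟩ := heven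
  have hbC : bridgeCount G = B.ncard := rfl
  rw [hbC]
  omega
end

section
/- Let G be a bipartite cactus graph with n ≥ 4 vertices and m edges whose degree sequence d satisfies β ≥ 1, where β = max{μ_1, (μ_1+μ_odd)/2}. Then m ≤ ⌊(4(n−1) − β)/3⌋. -/
open Finset SimpleGraph

section Aux

open SimpleGraph Walk

variable {V : Type*}

/-- Parity of walks under a 2-coloring. -/
lemma aux_walk_parity {G : SimpleGraph V} (C : G.Coloring (ZMod 2)) :
    ∀ {u v : V} (p : G.Walk u v), (C v : ZMod 2) = C u + p.length := by
  intro u v p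
  induction p with
  | nil => simp
  | @cons a b c h q ih =>
    have hne : C a ≠ C b := C.valid h
    have h1 : C b = C a + 1 := by
      revert hne; generalize C a = x; generalize C b = y; revert x y; decide
    rw [ih, h1]
    push_cast [Walk.length_cons]
    ring

lemma aux_cycle_even {G : SimpleGraph V} (hbip : G.Colorable 2) {u : V} (w : G.Walk u u) :
    Even w.length := by
  obtain ⟨C⟩ := hbip
  have C' : G.Coloring (ZMod 2) := C
  have := aux_walk_parity C' w
  have hz : ((w.length : ℕ) : ZMod 2) = 0 := by
    rwa [left_eq_add] at this
  rw [ZMod.natCast_eq_zero_iff] at hz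
  exact (even_iff_two_dvd).2 hz

/-- In a cycle based at `v`, the edges at `v` go to exactly two distinct vertices. -/
lemma aux_cycle_edges_at_start {G : SimpleGraph V} {v : V} {c : G.Walk v v} (hc : c.IsCycle) :
    ∃ x y, x ≠ y ∧ ∀ w, s(v, w) ∈ c.edges ↔ (w = x ∨ w = y) := by
  cases c with
  | nil => exact absurd hc (Walk.IsCycle.not_of_nil)
  | @cons _ x _ h q =>
    rw [Walk.cons_isCycle_iff] at hc
    obtain ⟨hq, hxq⟩ := hc
    have hxv : x ≠ v := h.ne'
    have hqr : ¬ q.reverse.Nil := by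
      rw [Walk.not_nil_iff_lt_length, Walk.length_reverse]
      rcases Nat.eq_zero_or_pos q.length with h0 | h0
      · exact absurd (Walk.eq_of_length_eq_zero h0) hxv
      · exact h0
    obtain ⟨y, h', r, hr⟩ := Walk.not_nil_iff.mp hqr
    have hrp : r.IsPath ∧ v ∉ r.support := by
      have := hq.reverse
      rw [hr, Walk.cons_isPath_iff] at this
      exact ⟨this.1, this.2⟩
    have hyq : s(v, y) ∈ q.edges := by
      rw [← List.mem_reverse, ← Walk.edges_reverse, hr]
      simp
    have hxy : x ≠ y := by
      rintro rfl
      exact hxq hyq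
    refine ⟨x, y, hxy, fun w => ?_⟩
    constructor
    · intro hw
      rw [Walk.edges_cons, List.mem_cons] at hw
      rcases hw with hw | hw
      · left; exact (Sym2.congr_right.mp hw)
      · right
        rw [← List.mem_reverse, ← Walk.edges_reverse, hr, Walk.edges_cons, List.mem_cons] at hw
        rcases hw with hw | hw
        · exact Sym2.congr_right.mp hw
        · exact absurd (r.fst_mem_support_of_mem_edges hw) hrp.2
    · rintro (rfl | rfl)
      · rw [Walk.edges_cons]; exact List.mem_cons_self
      · rw [Walk.edges_cons]; exact List.mem_cons_of_mem _ hyq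

/-- In a cycle based at `v` containing the edge `s(v,b)`, there is a detour from `b`
to `v` inside the cycle avoiding that edge. -/
lemma aux_cycle_detour {G : SimpleGraph V} {v b : V} {c : G.Walk v v} (hc : c.IsCycle)
    (hb : s(v, b) ∈ c.edges) :
    ∃ q : G.Walk b v, (∀ e ∈ q.edges, e ∈ c.edges) ∧ s(v, b) ∉ q.edges := by
  cases c with
  | nil => exact absurd hc (Walk.IsCycle.not_of_nil)
  | @cons _ x _ h p =>
    rw [Walk.cons_isCycle_iff] at hc
    obtain ⟨hp, hxp⟩ := hc
    by_cases hbx : b = x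
    · subst hbx
      exact ⟨p, fun e he => by rw [Walk.edges_cons]; exact List.mem_cons_of_mem _ he, hxp⟩
    · have hbp : s(v, b) ∈ p.edges := by
        rw [Walk.edges_cons, List.mem_cons] at hb
        rcases hb with hb | hb
        · exact absurd (Sym2.congr_right.mp hb) hbx
        · exact hb
      have hxv : x ≠ v := h.ne'
      have hqr : ¬ p.reverse.Nil := by
        rw [Walk.not_nil_iff_lt_length, Walk.length_reverse]
        rcases Nat.eq_zero_or_pos p.length with h0 | h0
        · exact absurd (Walk.eq_of_length_eq_zero h0) hxv
        · exact h0
      obtain ⟨y, h', r, hr⟩ := Walk.not_nil_iff.mp hqr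
      have hrp : r.IsPath ∧ v ∉ r.support := by
        have := hp.reverse
        rw [hr, Walk.cons_isPath_iff] at this
        exact ⟨this.1, this.2⟩
      have hby : b = y := by
        have : s(v, b) ∈ p.reverse.edges := by rw [Walk.edges_reverse, List.mem_reverse]; exact hbp
        rw [hr, Walk.edges_cons, List.mem_cons] at this
        rcases this with hw | hw
        · exact Sym2.congr_right.mp hw
        · exact absurd (r.fst_mem_support_of_mem_edges hw) hrp.2
      subst hby
      have hrsub : ∀ e ∈ r.edges, e ∈ p.edges := by
        intro e he
        rw [← List.mem_reverse, ← Walk.edges_reverse, hr, Walk.edges_cons]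
        exact List.mem_cons_of_mem _ he
      refine ⟨r.append (Walk.cons h.symm Walk.nil), ?_, ?_⟩
      · intro e he
        rw [Walk.edges_append, List.mem_append] at he
        rcases he with he | he
        · rw [Walk.edges_cons]; exact List.mem_cons_of_mem _ (hrsub e he)
        · simp only [Walk.edges_cons, Walk.edges_nil, List.mem_singleton] at he
          rw [Walk.edges_cons, he, Sym2.eq_swap]
          exact List.mem_cons_self
      · intro hmem
        rw [Walk.edges_append, List.mem_append] at hmem
        rcases hmem with hmem | hmem
        · exact hrp.2 (r.fst_mem_support_of_mem_edges hmem)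
        · simp only [Walk.edges_cons, Walk.edges_nil, List.mem_singleton] at hmem
          have h2 : s(v, b) = s(v, x) := by rw [hmem, Sym2.eq_swap]
          exact hbx (Sym2.congr_right.mp h2)

lemma aux_cycleEdgeSets_subset_edgeSet {G : SimpleGraph V} {s : Set (Sym2 V)}
    (hs : s ∈ cycleEdgeSets G) : s ⊆ G.edgeSet := by
  obtain ⟨u, w, _, rfl⟩ := hs
  intro e he
  exact w.edges_subset_edgeSet he

lemma aux_cycleEdgeSets_two_edges {G : SimpleGraph V} {s : Set (Sym2 V)}
    (hs : s ∈ cycleEdgeSets G) {v b : V} (hb : s(v, b) ∈ s) :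
    ∃ x y, x ≠ y ∧ ∀ w, s(v, w) ∈ s ↔ (w = x ∨ w = y) := by
  classical
  obtain ⟨u, w, hw, rfl⟩ := hs
  have hb' : s(v, b) ∈ w.edges := hb
  have hv : v ∈ w.support := w.fst_mem_support_of_mem_edges hb'
  obtain ⟨x, y, hxy, hiff⟩ := aux_cycle_edges_at_start (hw.rotate hv)
  refine ⟨x, y, hxy, fun z => ?_⟩
  rw [← hiff z]
  exact ((w.rotate_edges v hv).mem_iff).symm

lemma aux_cycleEdgeSets_detour {G : SimpleGraph V} {s : Set (Sym2 V)}
    (hs : s ∈ cycleEdgeSets G) {v b : V} (hb : s(v, b) ∈ s) :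
    ∃ q : G.Walk b v, (∀ e ∈ q.edges, e ∈ s) ∧ s(v, b) ∉ q.edges := by
  classical
  obtain ⟨u, w, hw, rfl⟩ := hs
  have hb' : s(v, b) ∈ w.edges := hb
  have hv : v ∈ w.support := w.fst_mem_support_of_mem_edges hb'
  have hb'' : s(v, b) ∈ (w.rotate v hv).edges := (w.rotate_edges v hv).mem_iff.mpr hb'
  obtain ⟨q, hq1, hq2⟩ := aux_cycle_detour (hw.rotate hv) hb''
  exact ⟨q, fun e he => (w.rotate_edges v hv).mem_iff.mp (hq1 e he), hq2⟩

lemma aux_not_bridge_iff {G : SimpleGraph V} {e : Sym2 V} (he : e ∈ G.edgeSet) :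
    ¬ G.IsBridge e ↔ ∃ s ∈ cycleEdgeSets G, e ∈ s := by
  rw [isBridge_iff_mem_and_forall_cycle_notMem he]
  constructor
  · intro h
    push_neg at h
    obtain ⟨u, p, hp, hep⟩ := h
    exact ⟨{e' | e' ∈ p.edges}, ⟨u, p, hp, rfl⟩, hep⟩
  · rintro ⟨s, ⟨u, p, hp, rfl⟩, hes⟩ h
    exact h p hp hes

lemma aux_walk_closed {G : SimpleGraph V} (S : Set V) (hS : ∀ x ∈ S, ∀ y, G.Adj x y → y ∈ S)
    {a z : V} (p : G.Walk a z) (ha : a ∈ S) : z ∈ S := by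
  induction p with
  | nil => exact ha
  | cons h q ih => exact ih (hS _ ha _ h)

lemma aux_unique_nbr {G : SimpleGraph V} {v w w' : V} (hd : gdeg G v = 1)
    (h : G.Adj v w) (h' : G.Adj v w') : w = w' := by
  obtain ⟨a, ha⟩ := Set.ncard_eq_one.mp hd
  have h1 : w ∈ G.neighborSet v := h
  have h2 : w' ∈ G.neighborSet v := h'
  rw [ha] at h1 h2
  rw [Set.mem_singleton_iff] at h1 h2
  rw [h1, h2]

lemma aux_not_both_deg_one {G : SimpleGraph V} [Fintype V] (hconn : G.Connected)
    (hcard : 3 ≤ Fintype.card V) {v w : V} (h : G.Adj v w)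
    (hv : gdeg G v = 1) (hw : gdeg G w = 1) : False := by
  classical
  obtain ⟨z, hz⟩ : ∃ z, z ∉ ({v, w} : Finset V) := by
    by_contra hall
    push_neg at hall
    have : (Finset.univ : Finset V) ⊆ {v, w} := fun x _ => hall x
    have := Finset.card_le_card this
    simp only [Finset.card_univ] at this
    have h2 : ({v, w} : Finset V).card ≤ 2 := Finset.card_insert_le _ _ |>.trans (by simp)
    omega
  have hclosed : ∀ x ∈ ({v, w} : Set V), ∀ y, G.Adj x y → y ∈ ({v, w} : Set V) := by
    intro x hx y hy
    rcases hx with rfl | rfl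
    · exact Or.inr (aux_unique_nbr hv hy h)
    · exact Or.inl (aux_unique_nbr hw hy h.symm)
  have := aux_walk_closed _ hclosed ((hconn v z).some) (Or.inl rfl)
  simp only [Set.mem_insert_iff, Set.mem_singleton_iff] at this
  rcases this with rfl | rfl <;> simp at hz

/-- A degree-one vertex's edge is a bridge in a cactus. -/
lemma aux_deg_one_bridge {G : SimpleGraph V} [Fintype V] (hG : IsCactus G) {v w : V}
    (hd : gdeg G v = 1) (hw : G.Adj v w) : G.IsBridge s(v, w) := by
  by_contra hb
  rw [aux_not_bridge_iff hw] at hb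
  obtain ⟨s, hs, hes⟩ := hb
  obtain ⟨x, y, hxy, hiff⟩ := aux_cycleEdgeSets_two_edges hs hes
  have hx : x ∈ G.neighborSet v := aux_cycleEdgeSets_subset_edgeSet hs ((hiff x).mpr (Or.inl rfl))
  have hy : y ∈ G.neighborSet v := aux_cycleEdgeSets_subset_edgeSet hs ((hiff y).mpr (Or.inr rfl))
  have hsub : ({x, y} : Set V) ⊆ G.neighborSet v := by
    intro z hz
    rcases hz with rfl | rfl
    · exact hx
    · exact hy
  have h2 : ({x, y} : Set V).ncard = 2 := Set.ncard_pair hxy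
  have hle := Set.ncard_le_ncard hsub (Set.toFinite _)
  unfold gdeg at hd
  rw [h2, hd] at hle
  omega

/-- In a cactus, every vertex of odd degree is incident to a bridge. -/
lemma aux_odd_bridge {G : SimpleGraph V} [Fintype V] (hG : IsCactus G) {v : V}
    (hodd : Odd (gdeg G v)) : ∃ w, G.IsBridge s(v, w) := by
  classical
  by_contra hnb
  push_neg at hnb
  -- every edge at v lies in a unique cycle edge set
  have hex : ∀ w ∈ (G.neighborSet v).toFinset, ∃ s ∈ cycleEdgeSets G, s(v, w) ∈ s := by
    intro w hw
    rw [Set.mem_toFinset] at hw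
    exact (aux_not_bridge_iff hw).mp (hnb w)
  set N : Finset V := (G.neighborSet v).toFinset with hN
  have hdeg : gdeg G v = N.card := by
    simp [gdeg, hN, Set.ncard_eq_toFinset_card']
  choose F hF1 hF2 using hex
  -- extend F to a total function
  let F' : V → Set (Sym2 V) := fun w => if h : w ∈ N then F w h else ∅
  have hcard : N.card = ∑ s ∈ N.image F', (N.filter (fun w => F' w = s)).card :=
    Finset.card_eq_sum_card_fiberwise (fun w hw => Finset.mem_image_of_mem F' hw)
  have hfiber : ∀ s ∈ N.image F', (N.filter (fun w => F' w = s)).card = 2 := by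
    intro s hsim
    obtain ⟨w0, hw0, hw0s⟩ := Finset.mem_image.mp hsim
    have hF'w0 : F' w0 = F w0 hw0 := dif_pos hw0
    have hs : s ∈ cycleEdgeSets G := by rw [← hw0s, hF'w0]; exact hF1 w0 hw0
    have hmem : s(v, w0) ∈ s := by rw [← hw0s, hF'w0]; exact hF2 w0 hw0
    obtain ⟨x, y, hxy, hiff⟩ := aux_cycleEdgeSets_two_edges hs hmem
    have hkey : ∀ w, (w ∈ N ∧ F' w = s) ↔ s(v, w) ∈ s := by
      intro w
      constructor
      · rintro ⟨hw, hFw⟩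
        have hfw : F' w = F w hw := dif_pos hw
        rw [← hFw, hfw]
        exact hF2 w hw
      · intro hws
        have hadj : G.Adj v w := aux_cycleEdgeSets_subset_edgeSet hs hws
        have hwN : w ∈ N := by rw [hN, Set.mem_toFinset]; exact hadj
        refine ⟨hwN, ?_⟩
        have hfw : F' w = F w hwN := dif_pos hwN
        rw [hfw]
        -- F w hwN and s share the edge s(v,w), so they are equal by cactus
        have := hG.2 (F w hwN) (hF1 w hwN) s hs ⟨s(v, w), hF2 w hwN, hws⟩
        exact this
      
    have : N.filter (fun w => F' w = s) = {x, y} := by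
      ext w
      rw [Finset.mem_filter, Finset.mem_insert, Finset.mem_singleton]
      rw [hkey w, hiff w]
    rw [this]
    rw [Finset.card_insert_of_notMem (by simp [hxy]), Finset.card_singleton]
  have : N.card = 2 * (N.image F').card := by
    rw [hcard, Finset.sum_congr rfl hfiber, Finset.sum_const, smul_eq_mul, mul_comm]
  rw [hdeg, this] at hodd
  exact (Nat.not_odd_iff_even.mpr (even_two_mul _)) hodd

lemma aux_reachable_lift {G H : SimpleGraph V} (h : ∀ a b, G.Adj a b → H.Reachable a b)
    {u v : V} (hr : G.Reachable u v) : H.Reachable u v := by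
  obtain ⟨p⟩ := hr
  induction p with
  | nil => exact Reachable.refl _
  | cons ha q ih => exact (h _ _ ha).trans ih

end Aux
/-- A bipartite cactus graph with `n ≥ 4` vertices and `β ≥ 1`
satisfies `m ≤ ⌊(4(n-1) - β)/3⌋`. -/
theorem stmt8 {V : Type*} [Fintype V] (G : SimpleGraph V) (hG : IsCactus G)
    (hbip : G.Colorable 2) (hn : 4 ≤ Fintype.card V) (hbeta : 1 ≤ graphBeta G) :
    G.edgeSet.ncard ≤ (4 * (Fintype.card V - 1) - graphBeta G) / 3 := by
  classical
  obtain ⟨hconn, hcac⟩ := hG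
  have hneV : Nonempty V := Fintype.card_pos_iff.mp (by omega)
  have hneS : Nonempty (Sym2 V) := ⟨s(Classical.arbitrary V, Classical.arbitrary V)⟩
  set n := Fintype.card V with hn'
  have hSfin : (cycleEdgeSets G).Finite := Set.toFinite _
  set SF := hSfin.toFinset with hSF
  have hcard_SF : (cycleEdgeSets G).ncard = SF.card := Set.ncard_eq_toFinset_card _ hSfin
  -- every cycle edge set has at least 4 elements
  have hcyc4 : ∀ s ∈ cycleEdgeSets G, 4 ≤ s.ncard ∧ s.Nonempty := by
    rintro s ⟨u, w, hw, rfl⟩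
    have hlen : 4 ≤ w.length := by
      have h3 := hw.three_le_length
      obtain ⟨k, hk⟩ := aux_cycle_even hbip w
      omega
    have hset : {e | e ∈ w.edges} = (↑w.edges.toFinset : Set (Sym2 V)) := by
      ext e; simp
    have hnc : {e | e ∈ w.edges}.ncard = w.length := by
      rw [hset, Set.ncard_coe_finset, List.toFinset_card_of_nodup hw.edges_nodup,
        Walk.length_edges]
    refine ⟨by omega, Set.nonempty_of_ncard_ne_zero (by omega)⟩
  have hcyc4' : ∀ s ∈ cycleEdgeSets G, 4 ≤ s.ncard := fun s hs => (hcyc4 s hs).1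
  -- pairwise disjointness of distinct cycle edge sets
  have hdisj : ∀ s ∈ cycleEdgeSets G, ∀ t ∈ cycleEdgeSets G, s ≠ t → Disjoint s t := by
    intro s hs t ht hst
    rw [Set.disjoint_iff_inter_eq_empty]
    by_contra hne
    exact hst (hcac s hs t ht (Set.nonempty_iff_ne_empty.mpr hne))
  ----------------------------------------------------------------
  -- PART A : m ≤ (n-1) + #cycles
  ----------------------------------------------------------------
  have hchoice : ∀ s : Set (Sym2 V), ∃ e, s ∈ cycleEdgeSets G → e ∈ s := by
    intro s
    by_cases h : s ∈ cycleEdgeSets G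
    · obtain ⟨e, he⟩ := (hcyc4 s h).2
      exact ⟨e, fun _ => he⟩
    · exact ⟨Classical.arbitrary _, fun hs => absurd hs h⟩
  choose f hf using hchoice
  set D : Set (Sym2 V) := f '' cycleEdgeSets G with hD
  have hDsub : D ⊆ G.edgeSet := by
    rintro e ⟨s, hs, rfl⟩
    exact aux_cycleEdgeSets_subset_edgeSet hs (hf s hs)
  have hadjreach : ∀ a b, G.Adj a b → (G.deleteEdges D).Reachable a b := by
    intro a b hab
    by_cases hDab : s(a, b) ∈ D
    · obtain ⟨s, hs, hfs⟩ := hDab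
      have hmem : s(a, b) ∈ s := hfs ▸ hf s hs
      obtain ⟨q, hq1, hq2⟩ := aux_cycleEdgeSets_detour hs hmem
      have hvalid : ∀ e ∈ q.edges, e ∉ D := by
        rintro e he ⟨t, ht, rfl⟩
        have hts : t = s := hcac t ht s hs ⟨f t, hf t ht, hq1 _ he⟩
        subst hts
        rw [hfs] at he
        exact hq2 he
      exact ⟨(q.toDeleteEdges D hvalid).reverse⟩
    · exact Adj.reachable (by rw [deleteEdges_adj]; exact ⟨hab, hDab⟩)
  have hconn' : (G.deleteEdges D).Connected := by
    constructor
    exact fun u v => aux_reachable_lift hadjreach (hconn u v)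
  have hacyc : (G.deleteEdges D).IsAcyclic := by
    intro a c hc
    have hsub : ∀ e ∈ c.edges, e ∈ G.edgeSet := by
      intro e he
      have := c.edges_subset_edgeSet he
      rw [edgeSet_deleteEdges] at this
      exact this.1
    have hc' : (c.transfer G hsub).IsCycle := hc.transfer hsub
    have hmemcyc : {e | e ∈ c.edges} ∈ cycleEdgeSets G :=
      ⟨a, c.transfer G hsub, hc', by rw [Walk.edges_transfer]⟩
    have hmemD : f {e | e ∈ c.edges} ∈ D := ⟨_, hmemcyc, rfl⟩
    have hin : f {e | e ∈ c.edges} ∈ {e | e ∈ c.edges} := hf _ hmemcyc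
    have hGe := c.edges_subset_edgeSet hin
    rw [edgeSet_deleteEdges] at hGe
    exact hGe.2 hmemD
  have htree : (G.deleteEdges D).IsTree := ⟨hconn', hacyc⟩
  haveI : Fintype (G.deleteEdges D).edgeSet := Fintype.ofFinite _
  have htreecard := htree.card_edgeFinset
  have hG'card : (G.deleteEdges D).edgeSet.ncard + 1 = n := by
    rw [Set.ncard_eq_toFinset_card']
    have heq : (G.deleteEdges D).edgeSet.toFinset = (G.deleteEdges D).edgeFinset := rfl
    rw [heq]
    exact htreecard
  have hsplit : G.edgeSet.ncard = (G.deleteEdges D).edgeSet.ncard + D.ncard := by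
    rw [edgeSet_deleteEdges]
    rw [← Set.ncard_union_eq disjoint_sdiff_self_left (Set.toFinite _) (Set.toFinite _),
      Set.diff_union_of_subset hDsub]
  have hDle : D.ncard ≤ SF.card := by
    rw [← hcard_SF]
    exact Set.ncard_image_le hSfin
  have hA : G.edgeSet.ncard ≤ (n - 1) + SF.card := by omega
  ----------------------------------------------------------------
  -- PART B : bridges + 4 * #cycles ≤ m
  ----------------------------------------------------------------
  have hBfin : {e : Sym2 V | G.IsBridge e}.Finite := Set.toFinite _
  set Bf : Finset (Sym2 V) := hBfin.toFinset with hBf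
  set U : Finset (Sym2 V) := SF.biUnion (fun s => (Set.toFinite s).toFinset) with hU
  have hUcard : 4 * SF.card ≤ U.card := by
    rw [hU, Finset.card_biUnion]
    · calc 4 * SF.card = ∑ _s ∈ SF, 4 := by rw [Finset.sum_const, smul_eq_mul, mul_comm]
        _ ≤ ∑ s ∈ SF, ((Set.toFinite s).toFinset).card := by
            apply Finset.sum_le_sum
            intro s hs
            rw [← Set.ncard_eq_toFinset_card _ (Set.toFinite s)]
            exact hcyc4' s (hSfin.mem_toFinset.mp hs)
    · intro s hs t ht hst
      rw [Function.onFun, Set.Finite.disjoint_toFinset]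
      exact hdisj s (hSfin.mem_toFinset.mp hs) t (hSfin.mem_toFinset.mp ht) hst
  have hBU : Disjoint Bf U := by
    rw [Finset.disjoint_left]
    intro e heB heU
    rw [hBf, Set.Finite.mem_toFinset] at heB
    rw [hU, Finset.mem_biUnion] at heU
    obtain ⟨s, hsSF, hes⟩ := heU
    rw [Set.Finite.mem_toFinset] at hes
    obtain ⟨u, w, hw, rfl⟩ := hSfin.mem_toFinset.mp hsSF
    exact heB.notMem_edges_of_isCycle hw hes
  have hBUsub : Bf ∪ U ⊆ (G.edgeSet.toFinite).toFinset := by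
    intro e he
    rw [Set.Finite.mem_toFinset]
    rcases Finset.mem_union.mp he with he | he
    · rw [hBf, Set.Finite.mem_toFinset] at he
      induction e using Sym2.ind with
      | _ a b => exact (he.reachable_iff_adj).mp (hconn a b)
    · rw [hU, Finset.mem_biUnion] at he
      obtain ⟨s, hsSF, hes⟩ := he
      rw [Set.Finite.mem_toFinset] at hes
      exact aux_cycleEdgeSets_subset_edgeSet (hSfin.mem_toFinset.mp hsSF) hes
  have hB : Bf.card + 4 * SF.card ≤ G.edgeSet.ncard := by
    have h1 : (Bf ∪ U).card ≤ (G.edgeSet.toFinite).toFinset.card := Finset.card_le_card hBUsub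
    rw [Finset.card_union_of_disjoint hBU] at h1
    rw [Set.ncard_eq_toFinset_card _ (G.edgeSet.toFinite)]
    omega
  ----------------------------------------------------------------
  -- PART C : beta ≤ bridges
  ----------------------------------------------------------------
  set O1 : Finset V := Finset.univ.filter (fun v => gdeg G v = 1) with hO1
  set Oodd : Finset V := Finset.univ.filter (fun v => Odd (gdeg G v) ∧ 1 < gdeg G v) with hOodd
  set O : Finset V := Finset.univ.filter (fun v => Odd (gdeg G v)) with hO
  have hg1 : gmu1 G = O1.card := by
    have heq : (Set.toFinite {v : V | gdeg G v = 1}).toFinset = O1 := by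
      ext v
      simp [hO1, Set.Finite.mem_toFinset]
    rw [gmu1, Set.ncard_eq_toFinset_card _ (Set.toFinite _), heq]
  have hgo : gmuOdd G = Oodd.card := by
    have heq : (Set.toFinite {v : V | Odd (gdeg G v) ∧ 1 < gdeg G v}).toFinset = Oodd := by
      ext v
      simp [hOodd, Set.Finite.mem_toFinset]
    rw [gmuOdd, Set.ncard_eq_toFinset_card _ (Set.toFinite _), heq]
  have hOsplit : O.card = O1.card + Oodd.card := by
    rw [← Finset.card_union_of_disjoint]
    · congr 1
      ext v
      simp only [hO, hO1, hOodd, Finset.mem_union, Finset.mem_filter, Finset.mem_univ, true_and,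
        Nat.odd_iff]
      omega
    · rw [Finset.disjoint_left]
      intro v hv hv'
      rw [hO1, Finset.mem_filter] at hv
      rw [hOodd, Finset.mem_filter] at hv'
      omega
  -- μ₁ ≤ #bridges
  have hnbr : ∀ v : V, ∃ w, gdeg G v = 1 → G.Adj v w := by
    intro v
    by_cases h : gdeg G v = 1
    · obtain ⟨a, ha⟩ := Set.ncard_eq_one.mp h
      refine ⟨a, fun _ => ?_⟩
      have : a ∈ G.neighborSet v := by rw [ha]; exact rfl
      exact this
    · exact ⟨Classical.arbitrary V, fun h' => absurd h' h⟩
  choose nb hnb using hnbr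
  have hmu1B : O1.card ≤ Bf.card := by
    apply Finset.card_le_card_of_injOn (fun v => s(v, nb v))
    · intro v hv
      rw [hO1, Finset.mem_coe, Finset.mem_filter] at hv
      rw [Finset.mem_coe, hBf, Set.Finite.mem_toFinset]
      exact aux_deg_one_bridge ⟨hconn, hcac⟩ hv.2 (hnb v hv.2)
    · intro v hv v' hv' heq
      simp only [hO1, Finset.mem_coe, Finset.mem_filter, Finset.mem_univ, true_and] at hv hv'
      rw [Sym2.eq_iff] at heq
      rcases heq with ⟨h1, _⟩ | ⟨h1, h2⟩
      · exact h1
      · exfalso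
        have hadj : G.Adj v' v := by rw [h1]; exact hnb v' hv'
        exact aux_not_both_deg_one hconn (by omega) hadj hv' hv
  -- μ₁ + μ_odd ≤ 2 * #bridges
  have hbr : ∀ v : V, ∃ w, Odd (gdeg G v) → G.IsBridge s(v, w) := by
    intro v
    by_cases h : Odd (gdeg G v)
    · obtain ⟨w, hw⟩ := aux_odd_bridge ⟨hconn, hcac⟩ h
      exact ⟨w, fun _ => hw⟩
    · exact ⟨Classical.arbitrary V, fun h' => absurd h' h⟩
  choose br hbr using hbr
  have hOB : O.card ≤ 2 * Bf.card := by
    have himg : O.image (fun v => s(v, br v)) ⊆ Bf := by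
      intro e he
      obtain ⟨v, hv, rfl⟩ := Finset.mem_image.mp he
      rw [hO, Finset.mem_filter] at hv
      rw [hBf, Set.Finite.mem_toFinset]
      exact hbr v hv.2
    have hcount : O.card = ∑ e ∈ O.image (fun v => s(v, br v)),
        (O.filter (fun v => s(v, br v) = e)).card :=
      Finset.card_eq_sum_card_fiberwise (fun v hv => Finset.mem_image_of_mem _ hv)
    have hfib : ∀ e ∈ O.image (fun v => s(v, br v)),
        (O.filter (fun v => s(v, br v) = e)).card ≤ 2 := by
      intro e _
      induction e using Sym2.ind with
      | _ a b =>
        have hsub2 : O.filter (fun v => s(v, br v) = s(a, b)) ⊆ {a, b} := by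
          intro v hv
          rw [Finset.mem_filter] at hv
          have : v ∈ s(a, b) := hv.2 ▸ Sym2.mem_mk_left v (br v)
          rw [Sym2.mem_iff] at this
          simpa using this
        exact (Finset.card_le_card hsub2).trans (Finset.card_insert_le _ _ |>.trans (by simp))
    calc O.card = ∑ e ∈ O.image (fun v => s(v, br v)),
          (O.filter (fun v => s(v, br v) = e)).card := hcount
      _ ≤ ∑ _e ∈ O.image (fun v => s(v, br v)), 2 := Finset.sum_le_sum hfib
      _ = 2 * (O.image (fun v => s(v, br v))).card := by
          rw [Finset.sum_const, smul_eq_mul, mul_comm]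
      _ ≤ 2 * Bf.card := by
          exact Nat.mul_le_mul_left 2 (Finset.card_le_card himg)
  ----------------------------------------------------------------
  -- Conclusion
  ----------------------------------------------------------------
  have hbeta' : graphBeta G ≤ Bf.card := by
    rw [graphBeta, hg1, hgo]
    omega
  have hn4 : 4 ≤ n := hn
  omega
end

section
/- Let G be a core cactus graph with degree sequence d. Then μ_1 ≥ μ_odd, i.e., the number of degree-1 vertices of G is at least the number of vertices of odd degree greater than 1. -/
open Finset SimpleGraph

namespace Stmt13Aux

open SimpleGraph Walk

variable {V : Type*}

/-- In a path starting at `x` (with `x ≠ y`), there is exactly one edge containing `x`. -/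
lemma start_edge {G : SimpleGraph V} {x y : V} (q : G.Walk x y) (hq : q.IsPath) (hxy : x ≠ y) :
    ∃ z, s(x, z) ∈ q.edges ∧ ∀ e ∈ q.edges, x ∈ e → e = s(x, z) := by
  cases q with
  | nil => exact absurd rfl hxy
  | @cons _ c _ h r =>
    refine ⟨c, by simp, ?_⟩
    intro e he hx
    rw [Walk.edges_cons, List.mem_cons] at he
    rcases he with rfl | he
    · rfl
    · exfalso
      obtain ⟨b, rfl⟩ := Sym2.mem_iff_exists.mp hx
      have hxs : x ∈ r.support := r.fst_mem_support_of_mem_edges he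
      exact ((Walk.cons_isPath_iff h r).mp hq).2 hxs

/-- A cycle based at `x` has exactly two edges containing `x`. -/
lemma cycle_two_edges_base {G : SimpleGraph V} {x : V} (c : G.Walk x x) (hc : c.IsCycle) :
    ∃ a b : Sym2 V, a ≠ b ∧ ∀ e, (e ∈ c.edges ∧ x ∈ e) ↔ (e = a ∨ e = b) := by
  cases c with
  | nil => exact absurd rfl hc.ne_nil
  | @cons _ z _ h r =>
    obtain ⟨hpath, hne⟩ := (Walk.cons_isCycle_iff r h).mp hc
    have hxz : x ≠ z := h.ne
    obtain ⟨y, hy, hyu⟩ := start_edge r.reverse hpath.reverse hxz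
    rw [Walk.edges_reverse, List.mem_reverse] at hy
    refine ⟨s(x, z), s(x, y), ?_, ?_⟩
    · intro heq
      have : y = z := by
        have := Sym2.eq_iff.mp heq.symm
        tauto
      exact hne (this ▸ hy)
    · intro e
      constructor
      · rintro ⟨he, hx⟩
        rw [Walk.edges_cons, List.mem_cons] at he
        rcases he with rfl | he
        · exact Or.inl rfl
        · right
          exact hyu e (by rw [Walk.edges_reverse, List.mem_reverse]; exact he) hx
      · rintro (rfl | rfl)
        · exact ⟨by simp, Sym2.mem_mk_left _ _⟩
        · exact ⟨by rw [Walk.edges_cons]; exact List.mem_cons_of_mem _ hy, Sym2.mem_mk_left _ _⟩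

/-- Any vertex on a cycle is on exactly two of its edges. -/
lemma cycle_two_edges {G : SimpleGraph V} {v : V} {w : G.Walk v v} (hw : w.IsCycle) {x : V}
    (hx : x ∈ w.support) :
    ∃ a b : Sym2 V, a ≠ b ∧ ∀ e, (e ∈ w.edges ∧ x ∈ e) ↔ (e = a ∨ e = b) := by
  classical
  obtain ⟨a, b, hab, hiff⟩ := cycle_two_edges_base (w.rotate x hx) (hw.rotate hx)
  refine ⟨a, b, hab, fun e => ?_⟩
  rw [← hiff e, (w.rotate_edges x hx).mem_iff]

lemma gdeg_eq_ncard {G : SimpleGraph V} {v : V} : gdeg G v = (G.neighborSet v).ncard := rfl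

/-- A vertex of degree one is on no cycle. -/
lemma leaf_not_in_cycle [Finite V] {G : SimpleGraph V} {x u : V} (hnb : G.neighborSet x = {u})
    {v : V} {w : G.Walk v v} (hw : w.IsCycle) : x ∉ w.support := by
  intro hx
  obtain ⟨a, b, hab, hiff⟩ := cycle_two_edges hw hx
  obtain ⟨ha, hxa⟩ := (hiff a).mpr (Or.inl rfl)
  obtain ⟨hb, hxb⟩ := (hiff b).mpr (Or.inr rfl)
  obtain ⟨a', rfl⟩ := Sym2.mem_iff_exists.mp hxa
  obtain ⟨b', rfl⟩ := Sym2.mem_iff_exists.mp hxb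
  have ha' : a' ∈ G.neighborSet x := w.edges_subset_edgeSet ha
  have hb' : b' ∈ G.neighborSet x := w.edges_subset_edgeSet hb
  rw [hnb, Set.mem_singleton_iff] at ha' hb'
  exact hab (by rw [ha', hb'])

/-- Deleting an edge on no cycle does not change the set of cycles. -/
lemma cycleEdgeSets_deleteEdges {G : SimpleGraph V} {e : Sym2 V}
    (he : ∀ s ∈ cycleEdgeSets G, e ∉ s) :
    cycleEdgeSets (G.deleteEdges {e}) = cycleEdgeSets G := by
  ext s
  constructor
  · rintro ⟨u, w, hw, rfl⟩
    refine ⟨u, w.transfer G (fun f hf => ?_), hw.transfer _, by rw [Walk.edges_transfer]⟩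
    have := w.edges_subset_edgeSet hf
    rw [SimpleGraph.edgeSet_deleteEdges] at this
    exact this.1
  · rintro ⟨u, w, hw, rfl⟩
    have hew : e ∉ w.edges := fun h => he _ ⟨u, w, hw, rfl⟩ h
    refine ⟨u, w.transfer _ (fun f hf => ?_), hw.transfer _, by rw [Walk.edges_transfer]⟩
    rw [SimpleGraph.edgeSet_deleteEdges]
    exact ⟨w.edges_subset_edgeSet hf, fun hfe => hew (hfe ▸ hf)⟩

/-- Bridges are the edges lying on no cycle. -/
lemma bridge_iff' {G : SimpleGraph V} {e : Sym2 V} :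
    (e ∈ G.edgeSet ∧ G.IsBridge e) ↔ e ∈ G.edgeSet ∧ ∀ s ∈ cycleEdgeSets G, e ∉ s := by
  constructor
  · rintro ⟨he, hb⟩
    refine ⟨he, fun s hs hes => ?_⟩
    obtain ⟨u, w, hw, rfl⟩ := hs
    exact (SimpleGraph.isBridge_iff_forall_cycle_notMem he).mp hb w hw hes
  · rintro ⟨he, h⟩
    exact ⟨he, (SimpleGraph.isBridge_iff_forall_cycle_notMem he).mpr
      fun u p hp hep => h _ ⟨u, p, hp, rfl⟩ hep⟩

/-- The connectivity-free part of being a core cactus. -/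
def Hyp (G : SimpleGraph V) : Prop :=
  (∀ s₁ ∈ cycleEdgeSets G, ∀ s₂ ∈ cycleEdgeSets G, (s₁ ∩ s₂).Nonempty → s₁ = s₂) ∧
    ∀ u v : V, G.Adj u v → G.IsBridge s(u, v) →
      ¬ (HasCycleFrom (G.deleteEdges {s(u, v)}) u ∧ HasCycleFrom (G.deleteEdges {s(u, v)}) v)

lemma hasCycleFrom_mono {G H : SimpleGraph V} (h : G ≤ H) {x : V} :
    HasCycleFrom G x → HasCycleFrom H x := by
  rintro ⟨u, w, hw, hr⟩
  exact ⟨u, w.mapLe h, hw.mapLe h, hr.mono h⟩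

lemma hyp_deleteEdges {G : SimpleGraph V} (hG : Hyp G) {e : Sym2 V}
    (he : ∀ s ∈ cycleEdgeSets G, e ∉ s) : Hyp (G.deleteEdges {e}) := by
  have hcs := cycleEdgeSets_deleteEdges he
  constructor
  · rw [hcs]; exact hG.1
  · intro a b hab hb hcyc
    have hadjG : G.Adj a b := (SimpleGraph.deleteEdges_adj.mp hab).1
    have hBe : G.IsBridge s(a, b) := by
      have h1 := (bridge_iff' (G := G.deleteEdges {e})).mp ⟨hab, hb⟩
      exact (bridge_iff'.mpr ⟨hadjG, hcs ▸ h1.2⟩).2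
    have hle : (G.deleteEdges {e}).deleteEdges {s(a, b)} ≤ G.deleteEdges {s(a, b)} := by
      rw [SimpleGraph.deleteEdges_deleteEdges]
      exact SimpleGraph.deleteEdges_anti (by intro f hf; exact Set.mem_union_right _ hf)
    exact hG.2 a b hadjG hBe ⟨hasCycleFrom_mono hle hcyc.1, hasCycleFrom_mono hle hcyc.2⟩

lemma nbrSet_del_of_ne {G : SimpleGraph V} {x u v : V} (hvx : v ≠ x) (hvu : v ≠ u) :
    (G.deleteEdges {s(x, u)}).neighborSet v = G.neighborSet v := by
  ext a
  simp only [SimpleGraph.mem_neighborSet, SimpleGraph.deleteEdges_adj, Set.mem_singleton_iff]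
  refine ⟨fun h => h.1, fun h => ⟨h, fun heq => ?_⟩⟩
  rcases Sym2.eq_iff.mp heq with ⟨rfl, rfl⟩ | ⟨rfl, rfl⟩
  · exact hvx rfl
  · exact hvu rfl

lemma nbrSet_del_x {G : SimpleGraph V} {x u : V} (hnb : G.neighborSet x = {u}) :
    (G.deleteEdges {s(x, u)}).neighborSet x = ∅ := by
  ext a
  simp only [SimpleGraph.mem_neighborSet, SimpleGraph.deleteEdges_adj, Set.mem_singleton_iff,
    Set.mem_empty_iff_false, iff_false, not_and, not_not]
  intro h
  have : a ∈ G.neighborSet x := h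
  rw [hnb, Set.mem_singleton_iff] at this
  rw [this]

lemma nbrSet_del_u {G : SimpleGraph V} {x u : V} :
    (G.deleteEdges {s(x, u)}).neighborSet u = G.neighborSet u \ {x} := by
  ext a
  simp only [SimpleGraph.mem_neighborSet, SimpleGraph.deleteEdges_adj, Set.mem_singleton_iff,
    Set.mem_diff, Set.mem_singleton_iff]
  constructor
  · rintro ⟨h, hne⟩
    refine ⟨h, fun rfl_ => ?_⟩
    subst rfl_
    exact hne (Sym2.eq_swap)
  · rintro ⟨h, hne⟩
    refine ⟨h, fun heq => ?_⟩
    rcases Sym2.eq_iff.mp heq with ⟨hux, hau⟩ | ⟨-, hax⟩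
    · exact h.ne (hau.symm)
    · exact hne hax

lemma gdeg_eq_incidence_ncard (G : SimpleGraph V) (v : V) :
    gdeg G v = {e | e ∈ G.edgeSet ∧ v ∈ e}.ncard := by
  have himg : (fun a => s(v, a)) '' G.neighborSet v = {e | e ∈ G.edgeSet ∧ v ∈ e} := by
    ext e
    constructor
    · rintro ⟨a, ha, rfl⟩
      exact ⟨ha, Sym2.mem_mk_left _ _⟩
    · rintro ⟨he, hv⟩
      obtain ⟨b, rfl⟩ := Sym2.mem_iff_exists.mp hv
      exact ⟨b, he, rfl⟩
  rw [gdeg_eq_ncard, ← himg, Set.ncard_image_of_injective _ fun a b hab => by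
    simpa using Sym2.congr_right.mp hab]

lemma even_gdeg_of_no_bridge [Fintype V] (G : SimpleGraph V)
    (hcact : ∀ s₁ ∈ cycleEdgeSets G, ∀ s₂ ∈ cycleEdgeSets G, (s₁ ∩ s₂).Nonempty → s₁ = s₂)
    (hnb : ∀ e ∈ G.edgeSet, ¬ G.IsBridge e) (v : V) : Even (gdeg G v) := by
  classical
  set A : Set (Sym2 V) := {e | e ∈ G.edgeSet ∧ v ∈ e} with hAdef
  have hex : ∀ e ∈ A, ∃ s, s ∈ cycleEdgeSets G ∧ e ∈ s := by
    intro e he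
    by_contra hcon
    push_neg at hcon
    exact hnb e he.1 (bridge_iff'.mpr ⟨he.1, fun s hs => hcon s hs⟩).2
  set φ : Sym2 V → Set (Sym2 V) :=
    fun e => if h : ∃ s, s ∈ cycleEdgeSets G ∧ e ∈ s then h.choose else ∅ with hφdef
  have hφmem : ∀ e ∈ A, φ e ∈ cycleEdgeSets G ∧ e ∈ φ e := by
    intro e he
    have h := hex e he
    simp only [hφdef, dif_pos h]
    exact h.choose_spec
  have hφuniq : ∀ e ∈ A, ∀ s ∈ cycleEdgeSets G, e ∈ s → φ e = s := by
    intro e he s hs hes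
    exact hcact _ (hφmem e he).1 _ hs ⟨e, (hφmem e he).2, hes⟩
  have hAfin : A.Finite := Set.toFinite _
  set Af : Finset (Sym2 V) := hAfin.toFinset with hAf
  have hmemAf : ∀ e, e ∈ Af ↔ e ∈ A := fun e => Set.Finite.mem_toFinset _
  set Bf : Finset (Set (Sym2 V)) := Af.image φ with hBf
  have hcards : Af.card = ∑ s ∈ Bf, (Af.filter (fun e => φ e = s)).card :=
    Finset.card_eq_sum_card_fiberwise (fun e he => Finset.mem_image_of_mem φ he)
  have hfiber : ∀ s ∈ Bf, (Af.filter (fun e => φ e = s)).card = 2 := by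
    intro s hs
    obtain ⟨e₀, he₀, rfl⟩ := Finset.mem_image.mp hs
    have he₀A := (hmemAf e₀).mp he₀
    obtain ⟨hscyc, he₀s⟩ := hφmem e₀ he₀A
    obtain ⟨z, w, hw, hset⟩ := hscyc
    have he₀w : e₀ ∈ w.edges := by
      have := he₀s; rw [hset] at this; exact this
    have hvsup : v ∈ w.support := by
      obtain ⟨b, hb⟩ := Sym2.mem_iff_exists.mp he₀A.2
      rw [hb] at he₀w
      exact w.fst_mem_support_of_mem_edges he₀w
    obtain ⟨a, b, hab, hiff⟩ := cycle_two_edges hw hvsup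
    have hmemw : ∀ f, f ∈ w.edges → f ∈ φ e₀ := fun f hf => by rw [hset]; exact hf
    have hfil : Af.filter (fun e => φ e = φ e₀) = {a, b} := by
      ext f
      rw [Finset.mem_filter, Finset.mem_insert, Finset.mem_singleton, hmemAf]
      constructor
      · rintro ⟨hfA, hfφ⟩
        have hfw : f ∈ w.edges := by
          have : f ∈ φ f := (hφmem f hfA).2
          rw [hfφ, hset] at this
          exact this
        exact (hiff f).mp ⟨hfw, hfA.2⟩
      · intro hfab
        have hfw : f ∈ w.edges ∧ v ∈ f := (hiff f).mpr hfab
        have hfA : f ∈ A := ⟨w.edges_subset_edgeSet hfw.1, hfw.2⟩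
        refine ⟨hfA, hφuniq f hfA (φ e₀) ⟨z, w, hw, hset⟩ (hmemw f hfw.1)⟩
    rw [hfil, Finset.card_insert_of_notMem (by simpa using hab), Finset.card_singleton]
  have hcard2 : Af.card = 2 * Bf.card := by
    rw [hcards, Finset.sum_congr rfl hfiber, Finset.sum_const, smul_eq_mul, mul_comm]
  rw [gdeg_eq_incidence_ncard, ← hAdef, Set.ncard_eq_toFinset_card _ hAfin, ← hAf, hcard2]
  exact ⟨Bf.card, by ring⟩

lemma side_no_cycle_false [Fintype V] {G : SimpleGraph V} {u v : V}
    (hnl : ∀ w, gdeg G w ≠ 1) (hadj : G.Adj u v) (hb : G.IsBridge s(u, v))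
    (hnc : ¬ HasCycleFrom (G.deleteEdges {s(u, v)}) u) : False := by
  classical
  set H := G.deleteEdges {s(u, v)} with hH
  have hnr : ¬ H.Reachable u v := SimpleGraph.isBridge_iff.mp hb
  set S : Set V := {w | H.Reachable u w} with hS
  have huS : u ∈ S := Set.mem_setOf.mpr (SimpleGraph.Reachable.refl u)
  have hvS : v ∉ S := hnr
  have hclosed : ∀ a, a ∈ S → ∀ b, H.Adj a b → b ∈ S := fun a ha b hab =>
    Set.mem_setOf.mpr ((Set.mem_setOf.mp ha).trans hab.reachable)
  set T := H.induce S with hT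
  have himg : ∀ w : S, Subtype.val '' (T.neighborSet w) = H.neighborSet w.val := by
    intro w
    ext a
    constructor
    · rintro ⟨⟨a', ha'S⟩, haT, rfl⟩
      exact haT
    · intro ha
      exact ⟨⟨a, hclosed _ w.2 _ ha⟩, ha, rfl⟩
  have hdeg : ∀ w : S, (T.neighborSet w).ncard = (H.neighborSet w.val).ncard := by
    intro w; rw [← himg w, Set.ncard_image_of_injective _ Subtype.val_injective]
  have hNH : ∀ w : V, w ≠ u → w ≠ v → H.neighborSet w = G.neighborSet w := fun w h1 h2 =>
    nbrSet_del_of_ne h1 h2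
  have hNu : H.neighborSet u = G.neighborSet u \ {v} := by
    rw [hH, show s(u, v) = s(v, u) from Sym2.eq_swap]
    exact nbrSet_del_u
  have hTconn : T.Connected := by
    rw [SimpleGraph.connected_induce_iff,
      SimpleGraph.Subgraph.connected_iff_forall_exists_walk_subgraph]
    refine ⟨⟨u, huS⟩, fun {a b} ha hb' => ?_⟩
    have hra : H.Reachable u a := ha
    have hrb : H.Reachable u b := hb'
    obtain ⟨p⟩ := hra.symm.trans hrb
    refine ⟨p, le_trans p.toSubgraph_le_induce_support
      (SimpleGraph.Subgraph.induce_mono le_rfl ?_)⟩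
    intro y hy
    exact Set.mem_setOf.mpr (hra.trans ⟨p.takeUntil y hy⟩)
  have hTacyc : ∀ (z : S) (c : T.Walk z z), ¬ c.IsCycle := by
    intro z c hc
    refine hnc ⟨z.val, c.map (SimpleGraph.Embedding.induce (G := H) S).toHom, ?_, z.2⟩
    exact hc.map (SimpleGraph.Embedding.induce (G := H) S).injective
  have htree : T.IsTree := ⟨hTconn, fun z c hc => hTacyc z c hc⟩
  haveI : Fintype S := Fintype.ofFinite _
  have hedges := htree.card_edgeFinset
  have hsum : ∑ w : S, T.degree w = 2 * T.edgeFinset.card := T.sum_degrees_eq_twice_card_edges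
  have hdegn : ∀ w : S, T.degree w = (T.neighborSet w).ncard := by
    intro w
    rw [← Nat.card_coe_set_eq, Nat.card_eq_fintype_card,
      SimpleGraph.card_neighborSet_eq_degree]
  set u' : S := ⟨u, huS⟩ with hu'
  have hdu : (H.neighborSet u).ncard + 1 = gdeg G u := by
    rw [hNu, gdeg_eq_ncard]
    exact Set.ncard_diff_singleton_add_one hadj (Set.toFinite _)
  by_cases hn1 : Fintype.card S = 1
  · have h0 : T.edgeFinset.card = 0 := by omega
    have hz : T.degree u' = 0 := by
      have h00 : ∑ w : S, T.degree w = 0 := by rw [hsum, h0]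
      exact (Finset.sum_eq_zero_iff.mp h00) u' (Finset.mem_univ _)
    have : (H.neighborSet u).ncard = 0 := by
      rw [← hdeg u', ← hdegn u', hz]
    exact hnl u (by omega)
  · have hn2 : 2 ≤ Fintype.card S := by
      have : 0 < Fintype.card S := Fintype.card_pos_iff.mpr ⟨u'⟩
      omega
    have hpos : ∀ w : S, 1 ≤ T.degree w := by
      intro w
      obtain ⟨y, hy⟩ := Fintype.exists_ne_of_one_lt_card (by omega) w
      obtain ⟨p⟩ := hTconn.preconnected w y
      cases p with
      | nil => exact absurd rfl hy.symm
      | @cons _ c _ hadj' q =>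
        rw [hdegn w]
        have : (T.neighborSet w).Nonempty := ⟨c, hadj'⟩
        have := (Set.ncard_pos (Set.toFinite _)).mpr this
        omega
    have h2 : ∀ w : S, w ≠ u' → 2 ≤ T.degree w := by
      intro w hw
      have hwu : (w : V) ≠ u := fun h => hw (Subtype.ext h)
      have hwv : (w : V) ≠ v := fun h => hvS (h ▸ w.2)
      have hdw : T.degree w = gdeg G w.val := by
        rw [hdegn, hdeg, hNH _ hwu hwv, gdeg_eq_ncard]
      have hne1 := hnl w.val
      have hp := hpos w
      omega
    have hsplit : ∑ w : S, T.degree w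
        = T.degree u' + ∑ w ∈ Finset.univ.erase u', T.degree w :=
      (Finset.add_sum_erase _ _ (Finset.mem_univ u')).symm
    have hbound := Finset.card_nsmul_le_sum (Finset.univ.erase u') (fun w => T.degree w) 2
      (fun w hw => h2 w (Finset.ne_of_mem_erase hw))
    have hcarderase : (Finset.univ.erase u').card = Fintype.card S - 1 := by
      rw [Finset.card_erase_of_mem (Finset.mem_univ _), Finset.card_univ]
    rw [hcarderase, smul_eq_mul] at hbound
    have hdu' := hpos u'
    omega

lemma no_bridge_uv [Fintype V] {G : SimpleGraph V} (hG : Hyp G)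
    (hnl : ∀ w, gdeg G w ≠ 1) (u v : V) (hadj : G.Adj u v) (hb : G.IsBridge s(u, v)) : False := by
  have hcore := hG.2 u v hadj hb
  by_cases hA : HasCycleFrom (G.deleteEdges {s(u, v)}) u
  · have hnB : ¬ HasCycleFrom (G.deleteEdges {s(u, v)}) v := fun hB => hcore ⟨hA, hB⟩
    have hb' : G.IsBridge s(v, u) := by rwa [show s(v, u) = s(u, v) from Sym2.eq_swap]
    refine side_no_cycle_false hnl hadj.symm hb' ?_
    rwa [show s(v, u) = s(u, v) from Sym2.eq_swap]
  · exact side_no_cycle_false hnl hadj hb hA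

lemma gmuOdd_eq_zero_of_no_leaf [Fintype V] {G : SimpleGraph V} (hG : Hyp G)
    (hnl : ∀ w, gdeg G w ≠ 1) : gmuOdd G = 0 := by
  have hnb : ∀ e ∈ G.edgeSet, ¬ G.IsBridge e := by
    intro e
    induction e using Sym2.ind with
    | _ a b => exact fun hadj hb => no_bridge_uv hG hnl a b hadj hb
  have heven := even_gdeg_of_no_bridge G hG.1 hnb
  show ({v : V | Odd (gdeg G v) ∧ 1 < gdeg G v}).ncard = 0
  rw [show {v : V | Odd (gdeg G v) ∧ 1 < gdeg G v} = ∅ from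
    Set.eq_empty_iff_forall_notMem.mpr fun v ⟨hodd, _⟩ =>
      (Nat.not_odd_iff_even.mpr (heven v)) hodd, Set.ncard_empty]

lemma ncard_setOf_eq_filter [Fintype V] (p : V → Prop) [DecidablePred p] :
    {v : V | p v}.ncard = (Finset.univ.filter p).card := by
  rw [Set.ncard_eq_toFinset_card', Set.toFinset_setOf]

lemma main [Fintype V] : ∀ (n : ℕ) (G : SimpleGraph V), G.edgeSet.ncard ≤ n → Hyp G →
    gmuOdd G ≤ gmu1 G := by
  intro n
  induction n with
  | zero =>
    intro G hle hG
    have hnl : ∀ w, gdeg G w ≠ 1 := by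
      intro w hw
      obtain ⟨a, hnb⟩ := Set.ncard_eq_one.mp hw
      have hadj : G.Adj w a := by
        have : a ∈ G.neighborSet w := by rw [hnb]; rfl
        exact this
      have : 0 < G.edgeSet.ncard :=
        (Set.ncard_pos (Set.toFinite _)).mpr ⟨s(w, a), hadj⟩
      omega
    rw [gmuOdd_eq_zero_of_no_leaf hG hnl]
    exact Nat.zero_le _
  | succ n ih =>
    intro G hle hG
    classical
    by_cases hleaf : ∃ x, gdeg G x = 1
    · obtain ⟨x, hx⟩ := hleaf
      obtain ⟨u, hnb⟩ := Set.ncard_eq_one.mp hx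
      have hadjxu : G.Adj x u := by
        have : u ∈ G.neighborSet x := by rw [hnb]; rfl
        exact this
      have hxu : x ≠ u := hadjxu.ne
      set G' := G.deleteEdges {s(x, u)} with hG'def
      have hecyc : ∀ s ∈ cycleEdgeSets G, s(x, u) ∉ s := by
        rintro s ⟨z, w, hw, rfl⟩ hme
        exact leaf_not_in_cycle hnb hw (w.fst_mem_support_of_mem_edges hme)
      have hHyp' : Hyp G' := hyp_deleteEdges hG hecyc
      have hcard : G'.edgeSet.ncard ≤ n := by
        have hsub : G'.edgeSet = G.edgeSet \ {s(x, u)} := SimpleGraph.edgeSet_deleteEdges _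
        have hm : s(x, u) ∈ G.edgeSet := hadjxu
        have := Set.ncard_diff_singleton_add_one hm (Set.toFinite _)
        rw [hsub]
        omega
      have IH := ih G' hcard hHyp'
      have dx' : gdeg G' x = 0 := by
        rw [gdeg_eq_ncard, hG'def, nbrSet_del_x hnb, Set.ncard_empty]
      have du' : gdeg G' u + 1 = gdeg G u := by
        rw [gdeg_eq_ncard, gdeg_eq_ncard, hG'def, nbrSet_del_u]
        exact Set.ncard_diff_singleton_add_one hadjxu.symm (Set.toFinite _)
      have dv' : ∀ w, w ≠ x → w ≠ u → gdeg G' w = gdeg G w := fun w h1 h2 => by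
        rw [gdeg_eq_ncard, gdeg_eq_ncard, hG'def, nbrSet_del_of_ne h1 h2]
      set L := Finset.univ.filter (fun w => gdeg G w = 1) with hLdef
      set L' := Finset.univ.filter (fun w => gdeg G' w = 1) with hL'def
      set O := Finset.univ.filter (fun w => gdeg G w % 2 = 1 ∧ 1 < gdeg G w) with hOdef
      set O' := Finset.univ.filter (fun w => gdeg G' w % 2 = 1 ∧ 1 < gdeg G' w) with hO'def
      have hgm1 : gmu1 G = L.card := by
        rw [show gmu1 G = {v : V | gdeg G v = 1}.ncard from rfl, ncard_setOf_eq_filter]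
      have hgm1' : gmu1 G' = L'.card := by
        rw [show gmu1 G' = {v : V | gdeg G' v = 1}.ncard from rfl, ncard_setOf_eq_filter]
      have hgmo : gmuOdd G = O.card := by
        rw [show gmuOdd G = {v : V | Odd (gdeg G v) ∧ 1 < gdeg G v}.ncard from rfl,
          ncard_setOf_eq_filter]
        apply congrArg Finset.card
        apply Finset.filter_congr
        intro w _
        rw [Nat.odd_iff]
      have hgmo' : gmuOdd G' = O'.card := by
        rw [show gmuOdd G' = {v : V | Odd (gdeg G' v) ∧ 1 < gdeg G' v}.ncard from rfl,
          ncard_setOf_eq_filter]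
        apply congrArg Finset.card
        apply Finset.filter_congr
        intro w _
        rw [Nat.odd_iff]
      have hxL : x ∈ L := by rw [hLdef]; simp [hx]
      have hxO : x ∉ O := by rw [hOdef]; simp [hx]
      have hd1 : 1 ≤ gdeg G u := by
        rw [gdeg_eq_ncard]
        exact (Set.ncard_pos (Set.toFinite _)).mpr ⟨x, hadjxu.symm⟩
      -- case distinction on the degree of u
      by_cases hdA : gdeg G u = 1
      · -- L' = (L.erase x).erase u, O' = O
        have hLeq : L' = (L.erase x).erase u := by
          ext w
          simp only [hL'def, hLdef, Finset.mem_filter, Finset.mem_univ, true_and,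
            Finset.mem_erase]
          by_cases hwx : w = x
          · subst hwx
            simp [hxu, dx']
          · by_cases hwu : w = u
            · subst hwu
              simp only [ne_eq, not_true_eq_false, false_and, iff_false]
              omega
            · rw [dv' w hwx hwu]
              simp [hwu, hwx]
        have hOeq : O' = O := by
          ext w
          simp only [hO'def, hOdef, Finset.mem_filter, Finset.mem_univ, true_and]
          by_cases hwx : w = x
          · subst hwx
            rw [dx', hx]
            omega
          · by_cases hwu : w = u
            · subst hwu
              rw [hdA] at du' ⊢
              omega
            · rw [dv' w hwx hwu]
        have huL : u ∈ L.erase x := by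
          rw [hLdef]
          simp only [Finset.mem_erase, Finset.mem_filter, Finset.mem_univ, true_and]
          exact ⟨hxu.symm, hdA⟩
        have hc1 : L'.card = L.card - 2 := by
          rw [hLeq, Finset.card_erase_of_mem huL, Finset.card_erase_of_mem hxL]
          omega
        have hcx : 1 ≤ L.card := Finset.card_pos.mpr ⟨x, hxL⟩
        rw [hgmo, hgm1]
        rw [hgmo', hgm1', hOeq, hc1] at IH
        omega
      · by_cases hdB : gdeg G u = 2
        · have hLeq : L' = insert u (L.erase x) := by
            ext w
            simp only [hL'def, hLdef, Finset.mem_filter, Finset.mem_univ, true_and,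
              Finset.mem_insert, Finset.mem_erase]
            by_cases hwx : w = x
            · subst hwx
              rw [dx']
              simp [hxu]
            · by_cases hwu : w = u
              · subst hwu
                rw [hdB] at du'
                simp
                omega
              · rw [dv' w hwx hwu]
                simp [hwu, hwx]
          have hOeq : O' = O := by
            ext w
            simp only [hO'def, hOdef, Finset.mem_filter, Finset.mem_univ, true_and]
            by_cases hwx : w = x
            · subst hwx
              rw [dx', hx]
              omega
            · by_cases hwu : w = u
              · subst hwu
                rw [hdB] at du' ⊢
                omega
              · rw [dv' w hwx hwu]
          have huL : u ∉ L.erase x := by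
            rw [hLdef]
            simp [hdB]
          have hc1 : L'.card = L.card := by
            rw [hLeq, Finset.card_insert_of_notMem huL, Finset.card_erase_of_mem hxL]
            have hcx : 1 ≤ L.card := Finset.card_pos.mpr ⟨x, hxL⟩
            omega
          rw [hgmo, hgm1]
          rw [hgmo', hgm1', hOeq, hc1] at IH
          omega
        · by_cases hdC : gdeg G u % 2 = 1
          · -- odd degree ≥ 3
            have hd3 : 3 ≤ gdeg G u := by omega
            have hLeq : L' = L.erase x := by
              ext w
              simp only [hL'def, hLdef, Finset.mem_filter, Finset.mem_univ, true_and,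
                Finset.mem_erase]
              by_cases hwx : w = x
              · subst hwx
                simp [dx']
              · by_cases hwu : w = u
                · subst hwu
                  simp [hwx]
                  omega
                · rw [dv' w hwx hwu]
                  simp [hwx]
            have hOeq : O' = O.erase u := by
              ext w
              simp only [hO'def, hOdef, Finset.mem_filter, Finset.mem_univ, true_and,
                Finset.mem_erase]
              by_cases hwx : w = x
              · subst hwx
                rw [dx', hx]
                simp only [ne_eq]
                omega
              · by_cases hwu : w = u
                · subst hwu
                  simp only [ne_eq, not_true_eq_false, false_and, iff_false]
                  omega
                · rw [dv' w hwx hwu]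
                  simp [hwu]
            have huO : u ∈ O := by
              rw [hOdef]
              simp
              omega
            have hc1 : L'.card = L.card - 1 := by
              rw [hLeq, Finset.card_erase_of_mem hxL]
            have hc2 : O'.card = O.card - 1 := by
              rw [hOeq, Finset.card_erase_of_mem huO]
            have hcx : 1 ≤ L.card := Finset.card_pos.mpr ⟨x, hxL⟩
            have hcu : 1 ≤ O.card := Finset.card_pos.mpr ⟨u, huO⟩
            rw [hgmo, hgm1]
            rw [hgmo', hgm1', hc1, hc2] at IH
            omega
          · -- even degree ≥ 4
            have hd4 : 4 ≤ gdeg G u := by omega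
            have hLeq : L' = L.erase x := by
              ext w
              simp only [hL'def, hLdef, Finset.mem_filter, Finset.mem_univ, true_and,
                Finset.mem_erase]
              by_cases hwx : w = x
              · subst hwx
                simp [dx']
              · by_cases hwu : w = u
                · subst hwu
                  simp [hwx]
                  omega
                · rw [dv' w hwx hwu]
                  simp [hwx]
            have hOeq : O' = insert u O := by
              ext w
              simp only [hO'def, hOdef, Finset.mem_filter, Finset.mem_univ, true_and,
                Finset.mem_insert]
              by_cases hwx : w = x
              · subst hwx
                rw [dx', hx]
                simp [hxu]
              · by_cases hwu : w = u
                · subst hwu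
                  simp
                  omega
                · rw [dv' w hwx hwu]
                  simp [hwu]
            have huO : u ∉ O := by
              rw [hOdef]
              simp
              omega
            have hc1 : L'.card = L.card - 1 := by
              rw [hLeq, Finset.card_erase_of_mem hxL]
            have hc2 : O'.card = O.card + 1 := by
              rw [hOeq, Finset.card_insert_of_notMem huO]
            have hcx : 1 ≤ L.card := Finset.card_pos.mpr ⟨x, hxL⟩
            rw [hgmo, hgm1]
            rw [hgmo', hgm1', hc1, hc2] at IH
            omega
    · push_neg at hleaf
      rw [gmuOdd_eq_zero_of_no_leaf hG hleaf]
      exact Nat.zero_le _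

end Stmt13Aux


/-- In a core cactus graph, the number of degree-1 vertices is at
least the number of vertices of odd degree greater than 1. -/
theorem stmt13 {V : Type*} [Fintype V] (G : SimpleGraph V) (hG : IsCoreCactus G) :
    gmuOdd G ≤ gmu1 G :=
  Stmt13Aux.main G.edgeSet.ncard G le_rfl ⟨hG.1.2, fun u v _ hb => hG.2 u v hb⟩
end
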